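/- arXiv:1112.5554 — 5 statements merged into one kernel-verified Lean document; each statement's English description precedes it below -/
import Mathlib

section
/- Let φ:(0,∞)→(0,∞) be non-decreasing, positive, continuous with δ_φ < 2 and set m = 2 - δ_φ. Then for every t > 0: (t^{δ_φ}/φ(t))·ℓ_m(t) ≤ ln_φ(t) ≤ (1/φ(1))·ℓ_m(t), and for all r ∈ ℝ: exp_φ(r) ≥ e_m(φ(1)·r). Consequently, if δ_φ > 1 then L_φ < ∞, and if δ_φ ≥ 1 then l_φ = -∞. -/
open Set MeasureTheory Filter ENNReal

noncomputable def lnphi (φ : ℝ → ℝ) (t : ℝ) : ℝ := ∫ s in (1:ℝ)..t, 1 / φ s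

noncomputable def philimsup (φ : ℝ → ℝ) (s : ℝ) : ℝ :=
  Filter.limsup (fun t => (φ (s + t) - φ s) / t) (nhdsWithin 0 (Set.Ioi 0))

def thetaSet (φ : ℝ → ℝ) : Set ℝ :=
  {x | ∃ s : ℝ, 0 < s ∧ x = s / φ s * philimsup φ s}

/-- The extended φ-exponential `exp_φ : ℝ → [0,∞]`: equal to `0` for `τ ≤ l_φ`,
to the inverse of `ln_φ` on `(l_φ, L_φ)`, and to `∞` for `τ ≥ L_φ`. -/
noncomputable def expphi (φ : ℝ → ℝ) (τ : ℝ) : ℝ≥0∞ :=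
  sSup {x : ℝ≥0∞ | ∃ t : ℝ, 0 < t ∧ lnphi φ t ≤ τ ∧ x = ENNReal.ofReal t}

/-- The m-exponential `e_m(τ) = [1+(m-1)τ]₊^{1/(m-1)}` (with `0^a = ∞` for `a < 0`),
and `e_1 = exp`. -/
noncomputable def expm (m τ : ℝ) : ℝ≥0∞ :=
  if m = 1 then ENNReal.ofReal (Real.exp τ)
  else if 1 < m then ENNReal.ofReal ((max (1 + (m - 1) * τ) 0) ^ (1 / (m - 1)))
  else if 1 + (m - 1) * τ ≤ 0 then ⊤
  else ENNReal.ofReal ((1 + (m - 1) * τ) ^ (1 / (m - 1)))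
/-- The m-logarithm `ℓ_m`. -/
noncomputable def ellm (m t : ℝ) : ℝ :=
  if m = 1 then Real.log t else (t ^ (m - 1) - 1) / (m - 1)

lemma freq_growth (φ : ℝ → ℝ) (hpos : ∀ s > (0:ℝ), 0 < φ s)
    (hmono : MonotoneOn φ (Ioi 0))
    {δ : ℝ} (hlb : δ ∈ lowerBounds (thetaSet φ)) (hδpos : 0 < δ)
    {s : ℝ} (hs : 0 < s) {ε : ℝ} (hε : 0 < ε) :
    ∃ᶠ t in nhdsWithin (0:ℝ) (Ioi 0), δ * φ s / s - ε < (φ (s + t) - φ s) / t := by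
  by_contra hcon
  rw [Filter.not_frequently] at hcon
  push_neg at hcon
  have hφs : 0 < φ s := hpos s hs
  have hq0 : ∀ᶠ t in nhdsWithin (0:ℝ) (Ioi 0), (0:ℝ) ≤ (φ (s + t) - φ s) / t := by
    filter_upwards [self_mem_nhdsWithin] with t ht
    have ht' : (0:ℝ) < t := ht
    have hm : φ s ≤ φ (s + t) := hmono (mem_Ioi.2 hs)
      (mem_Ioi.2 (show (0:ℝ) < s + t by linarith)) (show s ≤ s + t by linarith)
    exact div_nonneg (by linarith) ht'.le
  have hls : philimsup φ s ≤ δ * φ s / s - ε := by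
    apply Filter.limsup_le_of_le _ hcon
    exact isCoboundedUnder_le_of_eventually_le _ hq0
  have hmem : s / φ s * philimsup φ s ∈ thetaSet φ := ⟨s, hs, rfl⟩
  have hd := hlb hmem
  have h1 : s / φ s > 0 := by positivity
  have h2 : s / φ s * philimsup φ s ≤ s / φ s * (δ * φ s / s - ε) :=
    mul_le_mul_of_nonneg_left hls h1.le
  have h3 : s / φ s * (δ * φ s / s - ε) = δ - s / φ s * ε := by
    field_simp
  nlinarith [mul_pos h1 hε]

lemma climb (f : ℝ → ℝ) (a b : ℝ) (hab : a ≤ b) (hcont : ContinuousOn f (Icc a b))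
    (hfreq : ∀ s ∈ Ico a b, ∃ᶠ t in nhdsWithin (0:ℝ) (Ioi 0), f s < f (s + t)) :
    f a ≤ f b := by
  set S := Icc a b ∩ f ⁻¹' Ici (f a) with hS
  have hSne : S.Nonempty := ⟨a, ⟨le_refl a, hab⟩, le_refl (f a)⟩
  have hScl : IsClosed S := hcont.preimage_isClosed_of_isClosed isClosed_Icc isClosed_Ici
  have hScomp : IsCompact S := isCompact_Icc.of_isClosed_subset hScl inter_subset_left
  have hcS : sSup S ∈ S := hScomp.sSup_mem hSne
  set c := sSup S with hc
  rcases eq_or_lt_of_le hcS.1.2 with h | h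
  · rw [← h]; exact hcS.2
  · exfalso
    have hfr := hfreq c ⟨hcS.1.1, h⟩
    have hev : ∀ᶠ t in nhdsWithin (0:ℝ) (Ioi 0), t < b - c := by
      apply eventually_nhdsWithin_of_eventually_nhds
      exact Filter.Tendsto.eventually_lt_const (by linarith) Filter.tendsto_id
    have hev2 : ∀ᶠ t in nhdsWithin (0:ℝ) (Ioi 0), (0:ℝ) < t := self_mem_nhdsWithin
    obtain ⟨t, htf, htb, ht0⟩ := (hfr.and_eventually (hev.and hev2)).exists
    have hmemS : c + t ∈ S := by
      refine ⟨⟨by linarith [hcS.1.1], by linarith⟩, ?_⟩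
      exact le_trans hcS.2 htf.le
    have : c + t ≤ c := le_csSup ⟨b, fun x hx => hx.1.2⟩ hmemS
    linarith

lemma growth (φ : ℝ → ℝ) (hpos : ∀ s > (0:ℝ), 0 < φ s)
    (hmono : MonotoneOn φ (Ioi 0)) (hcont : ContinuousOn φ (Ioi 0))
    {δ : ℝ} (hlb : δ ∈ lowerBounds (thetaSet φ)) :
    ∀ a b : ℝ, 0 < a → a ≤ b → φ a * (b / a) ^ δ ≤ φ b := by
  intro a b ha hab
  have hb : 0 < b := lt_of_lt_of_le ha hab
  have hba : 1 ≤ b / a := (one_le_div ha).2 hab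
  rcases le_or_gt δ 0 with hδ | hδ
  · have h1 : (b / a) ^ δ ≤ 1 := Real.rpow_le_one_of_one_le_of_nonpos hba hδ
    have := hmono (mem_Ioi.2 ha) (mem_Ioi.2 hb) hab
    nlinarith [hpos a ha]
  -- case δ > 0
  have key : ∀ ε > (0:ℝ),
      Real.log (φ a) - δ * Real.log a + ε * a ≤ Real.log (φ b) - δ * Real.log b + ε * b := by
    intro ε hε
    set f : ℝ → ℝ := fun x => Real.log (φ x) - δ * Real.log x + ε * x with hf
    have hsub : Icc a b ⊆ Ioi 0 := fun x hx => lt_of_lt_of_le ha hx.1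
    have hfc : ContinuousOn f (Icc a b) := by
      refine ContinuousOn.add (ContinuousOn.sub ?_ ?_) ?_
      · exact ((hcont.mono hsub).log (fun x hx => (hpos x (hsub hx)).ne'))
      · exact continuousOn_const.mul
          (Real.continuousOn_log.mono (fun x hx => by simpa using (hsub hx).ne'))
      · exact continuousOn_const.mul continuousOn_id
    have := climb f a b hab hfc ?_
    · exact this
    intro s hs
    have hs0 : 0 < s := lt_of_lt_of_le ha hs.1
    have hφs : 0 < φ s := hpos s hs0
    set lam : ℝ := δ / s - ε / 2 with hlam
    clear_value lam
    rcases le_or_gt lam 0 with hlam0 | hlam0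
    · -- here δ/s ≤ ε/2; all small t work
      apply Filter.Eventually.frequently
      filter_upwards [self_mem_nhdsWithin] with t ht
      have ht0 : (0:ℝ) < t := ht
      have hst : 0 < s + t := by linarith
      have hm : φ s ≤ φ (s + t) := hmono (mem_Ioi.2 hs0) (mem_Ioi.2 hst) (by linarith)
      have hlog1 : Real.log (φ s) ≤ Real.log (φ (s + t)) := Real.log_le_log hφs hm
      have hlog2 : Real.log (s + t) - Real.log s ≤ t / s := by
        rw [← Real.log_div hst.ne' hs0.ne']
        have := Real.log_le_sub_one_of_pos (show 0 < (s+t)/s by positivity)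
        have h2 : (s + t) / s - 1 = t / s := by field_simp; ring
        linarith
      have hds : δ / s ≤ ε / 2 := by linarith
      have h3 : δ * (Real.log (s + t) - Real.log s) ≤ δ * (t / s) :=
        mul_le_mul_of_nonneg_left hlog2 hδ.le
      have h4 : δ * (t / s) = (δ / s) * t := by ring
      have h5 : (δ / s) * t ≤ (ε / 2) * t := mul_le_mul_of_nonneg_right hds ht0.le
      simp only [hf]
      nlinarith
    · -- lam > 0
      have hev : ∀ᶠ t in nhdsWithin (0:ℝ) (Ioi 0),
          0 < Real.log (1 + lam * t) - δ * Real.log (1 + t / s) + ε * t := by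
        set h : ℝ → ℝ := fun t => Real.log (1 + lam * t) - δ * Real.log (1 + t / s) + ε * t
          with hh
        have hd1 : HasDerivAt (fun t : ℝ => 1 + lam * t) lam 0 := by
          simpa using ((hasDerivAt_id (0:ℝ)).const_mul lam).const_add 1
        have hd2 : HasDerivAt (fun t : ℝ => 1 + t / s) (1 / s) 0 := by
          simpa using ((hasDerivAt_id (0:ℝ)).div_const s).const_add 1
        have hdl1 : HasDerivAt (fun t : ℝ => Real.log (1 + lam * t)) lam 0 := by
          have := hd1.log (by norm_num)
          simpa using this
        have hdl2 : HasDerivAt (fun t : ℝ => Real.log (1 + t / s)) (1 / s) 0 := by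
          have := hd2.log (by norm_num)
          simpa using this
        have hdh : HasDerivAt h (ε / 2) 0 := by
          have := (hdl1.sub (hdl2.const_mul δ)).add ((hasDerivAt_id (0:ℝ)).const_mul ε)
          convert this using 1
          all_goals first | rfl | (rw [hlam]; ring)
        have hsl := hasDerivAt_iff_tendsto_slope.1 hdh
        have hpos2 : ∀ᶠ u in nhdsWithin (0:ℝ) ({(0:ℝ)}ᶜ), 0 < slope h 0 u :=
          hsl.eventually (eventually_gt_nhds (by positivity))
        have hmono2 : nhdsWithin (0:ℝ) (Ioi 0) ≤ nhdsWithin (0:ℝ) ({(0:ℝ)}ᶜ) :=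
          nhdsWithin_mono 0 (fun x hx => ne_of_gt hx)
        filter_upwards [hmono2 hpos2, self_mem_nhdsWithin] with t htp ht0
        have ht0' : (0:ℝ) < t := ht0
        have : slope h 0 t = h t / t := by
          simp [slope_def_field, hh]
        rw [this] at htp
        have := (div_pos_iff.1 htp)
        rcases this with ⟨h1, _⟩ | ⟨_, h2⟩
        · exact h1
        · linarith
      have hfr := freq_growth φ hpos hmono hlb hδ hs0 (show 0 < ε * φ s / 2 by positivity)
      apply (hfr.and_eventually (hev.and self_mem_nhdsWithin)).mono
      rintro t ⟨hq, hht, ht0⟩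
      have ht0' : (0:ℝ) < t := ht0
      have hst : 0 < s + t := by linarith
      have hc : δ * φ s / s - ε * φ s / 2 = φ s * lam := by
        rw [hlam]; field_simp
      rw [hc] at hq
      have hq' : φ s * (1 + lam * t) < φ (s + t) := by
        have h2 : φ s * lam * t < φ (s + t) - φ s := (lt_div_iff₀ ht0').1 hq
        nlinarith
      have h1lam : 0 < 1 + lam * t := by positivity
      have hφst : 0 < φ (s + t) := hpos _ hst
      have hlog : Real.log (φ s) + Real.log (1 + lam * t) < Real.log (φ (s + t)) := by
        have := Real.log_lt_log (by positivity) hq'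
        rwa [Real.log_mul hφs.ne' h1lam.ne'] at this
      have hlogst : Real.log (s + t) - Real.log s = Real.log (1 + t / s) := by
        rw [← Real.log_div hst.ne' hs0.ne']
        congr 1
        field_simp
      simp only [hf]
      have hhtt : 0 < Real.log (1 + lam * t) - δ * Real.log (1 + t / s) + ε * t := hht
      nlinarith [hlogst]
  -- take ε → 0
  have hfin : Real.log (φ a) - δ * Real.log a ≤ Real.log (φ b) - δ * Real.log b := by
    apply _root_.le_of_forall_pos_le_add
    intro η hη
    have hε : 0 < η / (b - a + 1) := div_pos hη (by linarith)
    have := key _ hε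
    have hba' : (b - a) / (b - a + 1) ≤ 1 := by
      rw [div_le_one (by linarith)]; linarith
    have : η / (b - a + 1) * b - η / (b - a + 1) * a ≤ η := by
      have h1 : η / (b - a + 1) * b - η / (b - a + 1) * a = η * ((b - a) / (b - a + 1)) := by
        field_simp
      nlinarith
    linarith [key _ hε]
  -- exponentiate
  have hrp : (b / a) ^ δ = Real.exp (δ * Real.log (b / a)) := by
    rw [Real.rpow_def_of_pos (by positivity), mul_comm]
  have hlba : Real.log (b / a) = Real.log b - Real.log a := Real.log_div hb.ne' ha.ne'
  have hφa : 0 < φ a := hpos a ha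
  have hφb : 0 < φ b := hpos b hb
  calc φ a * (b / a) ^ δ = Real.exp (Real.log (φ a) + δ * Real.log (b / a)) := by
        rw [Real.exp_add, Real.exp_log hφa, hrp]
    _ ≤ Real.exp (Real.log (φ b)) := by
        apply Real.exp_le_exp.2
        rw [hlba]; linarith
    _ = φ b := Real.exp_log hφb

lemma ellm_eq (δ : ℝ) {t : ℝ} (ht : 0 < t) :
    ellm (2 - δ) t = ∫ s in (1:ℝ)..t, s ^ (-δ) := by
  have h0 : (0:ℝ) ∉ uIcc 1 t := Set.notMem_uIcc_of_lt one_pos ht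
  by_cases hδ : δ = 1
  · subst hδ
    have : (2:ℝ) - 1 = 1 := by norm_num
    rw [ellm, if_pos this]
    rw [show ∫ s in (1:ℝ)..t, s ^ (-1:ℝ) = ∫ s in (1:ℝ)..t, 1 / s from
      intervalIntegral.integral_congr (fun s hs => by
        rw [Real.rpow_neg_one, one_div])]
    rw [integral_one_div h0, div_one]
  · have hne : (2:ℝ) - δ ≠ 1 := by intro h; apply hδ; linarith
    rw [ellm, if_neg hne]
    rw [integral_rpow (Or.inr ⟨by intro h; apply hδ; linarith, h0⟩)]
    rw [Real.one_rpow]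
    have he : (2:ℝ) - δ - 1 = -δ + 1 := by ring
    rw [he]

/-- For φ with δ_φ < 2 and m = 2 - δ_φ:
`(t^{δ_φ}/φ(t))·ℓ_m(t) ≤ ln_φ(t) ≤ (1/φ(1))·ℓ_m(t)` and `exp_φ(r) ≥ e_m(φ(1)r)`.
Consequently, if δ_φ > 1 then L_φ < ∞, and if δ_φ ≥ 1 then l_φ = -∞. -/
theorem stmt5 (φ : ℝ → ℝ)
    (hpos : ∀ s > (0:ℝ), 0 < φ s)
    (hmono : MonotoneOn φ (Ioi 0))
    (hcont : ContinuousOn φ (Ioi 0))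
    (δ : ℝ) (hδ : IsGLB (thetaSet φ) δ) (hδ2 : δ < 2) :
    (∀ t > (0:ℝ),
      t ^ δ / φ t * ellm (2 - δ) t ≤ lnphi φ t ∧
        lnphi φ t ≤ 1 / φ 1 * ellm (2 - δ) t) ∧
    (∀ r : ℝ, expm (2 - δ) (φ 1 * r) ≤ expphi φ r) ∧
    (1 < δ → ∃ L : ℝ, Filter.Tendsto (lnphi φ) Filter.atTop (nhds L)) ∧
    (1 ≤ δ → Filter.Tendsto (lnphi φ) (nhdsWithin 0 (Set.Ioi 0)) Filter.atBot) := by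
  have hφ1 : 0 < φ 1 := hpos 1 one_pos
  have hgrow := growth φ hpos hmono hcont hδ.1
  have hsubI : ∀ u v : ℝ, 0 < u → 0 < v → uIcc u v ⊆ Ioi 0 := by
    intro u v hu hv x hx
    exact lt_of_lt_of_le (lt_min hu hv) hx.1
  have hInt1 : ∀ u v : ℝ, 0 < u → 0 < v →
      IntervalIntegrable (fun s => 1 / φ s) volume u v := by
    intro u v hu hv
    apply ContinuousOn.intervalIntegrable
    exact continuousOn_const.div (hcont.mono (hsubI u v hu hv))
      (fun x hx => (hpos x (hsubI u v hu hv hx)).ne')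
  have hInt2 : ∀ u v : ℝ, 0 < u → 0 < v →
      IntervalIntegrable (fun s : ℝ => s ^ (-δ)) volume u v := by
    intro u v hu hv
    apply ContinuousOn.intervalIntegrable
    exact continuousOn_id.rpow_const (fun x hx => Or.inl (ne_of_gt (hsubI u v hu hv hx)))
  -- pointwise bounds
  have hpt_up : ∀ s : ℝ, 0 < s → 1 ≤ s → 1 / φ s ≤ 1 / φ 1 * s ^ (-δ) := by
    intro s hs0 h1s
    have hφs := hpos s hs0
    have hg := hgrow 1 s one_pos h1s
    rw [div_one] at hg
    have he : 1 / φ 1 * s ^ (-δ) = 1 / (φ 1 * s ^ δ) := by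
      rw [Real.rpow_neg hs0.le]
      field_simp
    rw [he]
    exact one_div_le_one_div_of_le (by positivity) hg
  have hpt_up' : ∀ s : ℝ, 0 < s → s ≤ 1 → 1 / φ 1 * s ^ (-δ) ≤ 1 / φ s := by
    intro s hs0 h1s
    have hφs := hpos s hs0
    have hg := hgrow s 1 hs0 h1s
    have hsd : (0:ℝ) < s ^ δ := Real.rpow_pos_of_pos hs0 δ
    have h1s' : ((1:ℝ) / s) ^ δ = (s ^ δ)⁻¹ := by
      rw [one_div, Real.inv_rpow hs0.le]
    rw [h1s'] at hg
    have hφle : φ s ≤ φ 1 * s ^ δ := by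
      have h2 := mul_le_mul_of_nonneg_right hg hsd.le
      rw [mul_assoc, inv_mul_cancel₀ hsd.ne'] at h2
      simpa using h2
    have he : 1 / φ 1 * s ^ (-δ) = 1 / (φ 1 * s ^ δ) := by
      rw [Real.rpow_neg hs0.le]
      field_simp
    rw [he]
    exact one_div_le_one_div_of_le hφs hφle
  have hpt_lo : ∀ s t : ℝ, 0 < s → 0 < t → s ≤ t →
      t ^ δ / φ t * s ^ (-δ) ≤ 1 / φ s := by
    intro s t hs0 ht0 hst
    have hφs := hpos s hs0
    have hφt := hpos t ht0
    have hg := hgrow s t hs0 hst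
    have he : t ^ δ / φ t * s ^ (-δ) = (t / s) ^ δ / φ t := by
      rw [Real.div_rpow ht0.le hs0.le, Real.rpow_neg hs0.le]
      ring
    rw [he, div_le_div_iff₀ hφt hφs]
    nlinarith [Real.rpow_pos_of_pos (show (0:ℝ) < t / s by positivity) δ]
  have hpt_lo' : ∀ s t : ℝ, 0 < s → 0 < t → t ≤ s →
      1 / φ s ≤ t ^ δ / φ t * s ^ (-δ) := by
    intro s t hs0 ht0 hst
    have hφs := hpos s hs0
    have hφt := hpos t ht0
    have hg := hgrow t s ht0 hst
    have he : t ^ δ / φ t * s ^ (-δ) = (t / s) ^ δ / φ t := by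
      rw [Real.div_rpow ht0.le hs0.le, Real.rpow_neg hs0.le]
      ring
    have hts : ((s:ℝ) / t) ^ δ * ((t:ℝ) / s) ^ δ = 1 := by
      rw [← Real.mul_rpow (by positivity) (by positivity)]
      rw [div_mul_div_comm]
      rw [show s * t / (t * s) = 1 by rw [mul_comm t s]; exact div_self (by positivity)]
      exact Real.one_rpow δ
    rw [he, div_le_div_iff₀ hφs hφt]
    have h1 : (0:ℝ) < (s / t) ^ δ := Real.rpow_pos_of_pos (by positivity) δ
    nlinarith [hg]
  have part1 : ∀ t > (0:ℝ),
      t ^ δ / φ t * ellm (2 - δ) t ≤ lnphi φ t ∧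
        lnphi φ t ≤ 1 / φ 1 * ellm (2 - δ) t := by
    intro t ht
    have hφt := hpos t ht
    rw [ellm_eq δ ht]
    rcases le_or_gt 1 t with h1t | h1t
    · have hIl := hInt1 1 t one_pos ht
      have hIr := hInt2 1 t one_pos ht
      constructor
      · rw [← intervalIntegral.integral_const_mul]
        apply intervalIntegral.integral_mono_on h1t (hIr.const_mul _) hIl
        intro s hs
        exact hpt_lo s t (lt_of_lt_of_le one_pos hs.1) ht hs.2
      · rw [← intervalIntegral.integral_const_mul]
        apply intervalIntegral.integral_mono_on h1t hIl (hIr.const_mul _)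
        intro s hs
        exact hpt_up s (lt_of_lt_of_le one_pos hs.1) hs.1
    · have hIl := hInt1 t 1 ht one_pos
      have hIr := hInt2 t 1 ht one_pos
      have e1 : lnphi φ t = -∫ s in t..(1:ℝ), 1 / φ s := by
        rw [lnphi, intervalIntegral.integral_symm]
      have e2 : (∫ s in (1:ℝ)..t, s ^ (-δ)) = -∫ s in t..(1:ℝ), s ^ (-δ) :=
        intervalIntegral.integral_symm _ _
      constructor
      · rw [e1, e2, mul_neg, neg_le_neg_iff, ← intervalIntegral.integral_const_mul]
        apply intervalIntegral.integral_mono_on h1t.le hIl (hIr.const_mul _)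
        intro s hs
        exact hpt_lo' s t (lt_of_lt_of_le ht hs.1) ht hs.1
      · rw [e1, e2, mul_neg, neg_le_neg_iff, ← intervalIntegral.integral_const_mul]
        apply intervalIntegral.integral_mono_on h1t.le (hIr.const_mul _) hIl
        intro s hs
        exact hpt_up' s (lt_of_lt_of_le ht hs.1) hs.2
  refine ⟨part1, ?_, ?_, ?_⟩
  · -- part 2
    intro r
    set τ := φ 1 * r with hτ
    have hlnle : ∀ t : ℝ, 0 < t → ellm (2 - δ) t ≤ τ → lnphi φ t ≤ r := by
      intro t ht hel
      have h2 := (part1 t ht).2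
      have h3 : 1 / φ 1 * ellm (2 - δ) t ≤ 1 / φ 1 * τ :=
        mul_le_mul_of_nonneg_left hel (by positivity)
      have hτr : 1 / φ 1 * τ = r := by
        rw [hτ]; field_simp
      linarith
    have hmemle : ∀ t : ℝ, 0 < t → ellm (2 - δ) t ≤ τ →
        ENNReal.ofReal t ≤ expphi φ r := by
      intro t ht hel
      exact le_sSup ⟨t, ht, hlnle t ht hel, rfl⟩
    by_cases hm1 : (2:ℝ) - δ = 1
    · rw [expm, if_pos hm1]
      apply hmemle _ (Real.exp_pos τ)
      rw [ellm, if_pos hm1, Real.log_exp]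
    · have hm0 : (2:ℝ) - δ - 1 ≠ 0 := fun h => hm1 (by linarith)
      have hcompute : ∀ u : ℝ, 0 < u → u = 1 + ((2:ℝ) - δ - 1) * τ →
          ellm (2 - δ) (u ^ (1 / ((2:ℝ) - δ - 1))) ≤ τ := by
        intro u hu huu
        rw [ellm, if_neg hm1]
        have hpow : (u ^ (1 / ((2:ℝ) - δ - 1))) ^ ((2:ℝ) - δ - 1) = u := by
          rw [← Real.rpow_mul hu.le, one_div_mul_cancel hm0, Real.rpow_one]
        rw [hpow, huu]
        apply le_of_eq
        field_simp
        ring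
      rcases lt_or_gt_of_ne (fun h : (2:ℝ) - δ - 1 = 0 => hm0 h)
        |>.imp (fun h => h) (fun h => h) with hmlt | hmgt
      · -- 2 - δ - 1 < 0, i.e. δ > 1
        rw [expm, if_neg hm1, if_neg (show ¬(1:ℝ) < 2 - δ by intro h; linarith)]
        by_cases hu : 1 + ((2:ℝ) - δ - 1) * τ ≤ 0
        · rw [if_pos hu, top_le_iff, expphi, sSup_eq_top]
          intro b hb
          set t : ℝ := b.toReal + 1 with htdef
          have ht : 0 < t := by positivity
          have hel : ellm (2 - δ) t ≤ τ := by
            rw [ellm, if_neg hm1]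
            rw [div_le_iff_of_neg hmlt]
            have := Real.rpow_pos_of_pos ht ((2:ℝ) - δ - 1)
            nlinarith
          refine ⟨ENNReal.ofReal t, ⟨t, ht, hlnle t ht hel, rfl⟩, ?_⟩
          exact (ENNReal.lt_ofReal_iff_toReal_lt hb.ne).2 (by linarith)
        · rw [if_neg hu]
          push_neg at hu
          exact hmemle _ (Real.rpow_pos_of_pos hu _) (hcompute _ hu rfl)
      · rw [expm, if_neg hm1, if_pos (show (1:ℝ) < 2 - δ by linarith)]
        by_cases hu : 1 + ((2:ℝ) - δ - 1) * τ ≤ 0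
        · rw [max_eq_right hu, Real.zero_rpow (one_div_ne_zero hm0)]
          simp
        · push_neg at hu
          rw [max_eq_left hu.le]
          exact hmemle _ (Real.rpow_pos_of_pos hu _) (hcompute _ hu rfl)
  all_goals
    have hlnmono : ∀ u v : ℝ, 0 < u → u ≤ v → lnphi φ u ≤ lnphi φ v := by
      intro u v hu huv
      have hv : 0 < v := lt_of_lt_of_le hu huv
      have h1 : lnphi φ u + (∫ s in u..v, 1 / φ s) = lnphi φ v :=
        intervalIntegral.integral_add_adjacent_intervals
          (hInt1 1 u one_pos hu) (hInt1 u v hu hv)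
      have h2 : 0 ≤ ∫ s in u..v, 1 / φ s := by
        apply intervalIntegral.integral_nonneg huv
        intro x hx
        exact le_of_lt (div_pos one_pos (hpos x (lt_of_lt_of_le hu hx.1)))
      linarith
  · -- part 3
    intro h1δ
    have hm1 : (2:ℝ) - δ ≠ 1 := by intro h; linarith
    have hmlt : (2:ℝ) - δ - 1 < 0 := by linarith
    have hbound : ∀ t > (0:ℝ), lnphi φ t ≤ 1 / φ 1 * (-1 / (2 - δ - 1)) := by
      intro t ht
      have h2 := (part1 t ht).2
      have hel : ellm (2 - δ) t ≤ -1 / (2 - δ - 1) := by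
        rw [ellm, if_neg hm1, div_le_iff_of_neg hmlt]
        have hp := Real.rpow_pos_of_pos ht ((2:ℝ) - δ - 1)
        have he : -1 / (2 - δ - 1) * (2 - δ - 1) = -1 :=
          div_mul_cancel₀ _ (ne_of_lt hmlt)
        linarith
      have h3 : 1 / φ 1 * ellm (2 - δ) t ≤ 1 / φ 1 * (-1 / (2 - δ - 1)) :=
        mul_le_mul_of_nonneg_left hel (by positivity)
      linarith
    set g : ℝ → ℝ := fun x => lnphi φ (max x 1) with hg
    have hgm : Monotone g := fun x y hxy =>
      hlnmono _ _ (lt_of_lt_of_le one_pos (le_max_right x 1))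
        (max_le_max hxy (le_refl 1))
    have hgb : BddAbove (Set.range g) := by
      refine ⟨1 / φ 1 * (-1 / (2 - δ - 1)), ?_⟩
      rintro _ ⟨x, rfl⟩
      exact hbound _ (lt_of_lt_of_le one_pos (le_max_right x 1))
    refine ⟨⨆ x, g x, ?_⟩
    apply (tendsto_atTop_ciSup hgm hgb).congr'
    filter_upwards [eventually_ge_atTop (1:ℝ)] with x hx
    simp only [hg, max_eq_left hx]
  · -- part 4
    intro h1δ
    have hub : ∀ᶠ t in nhdsWithin (0:ℝ) (Ioi 0),
        lnphi φ t ≤ 1 / φ 1 * ellm (2 - δ) t := by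
      filter_upwards [self_mem_nhdsWithin] with t ht
      exact (part1 t ht).2
    apply tendsto_atBot_mono' _ hub
    have hell : Tendsto (fun t => ellm (2 - δ) t) (nhdsWithin (0:ℝ) (Ioi 0)) atBot := by
      rcases eq_or_lt_of_le h1δ with h | h
      · have hm1 : (2:ℝ) - δ = 1 := by rw [← h]; norm_num
        apply Real.tendsto_log_nhdsGT_zero.congr
        intro t
        rw [ellm, if_pos hm1]
      · have hm1 : (2:ℝ) - δ ≠ 1 := by intro hh; linarith
        have hmlt : (2:ℝ) - δ - 1 < 0 := by linarith
        have hpow : Tendsto (fun t : ℝ => t ^ ((2:ℝ) - δ - 1))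
            (nhdsWithin (0:ℝ) (Ioi 0)) atTop := by
          have h2 : Tendsto (fun x : ℝ => x ^ (δ - 1)) atTop atTop :=
            tendsto_rpow_atTop (by linarith)
          apply (h2.comp tendsto_inv_nhdsGT_zero).congr'
          filter_upwards [self_mem_nhdsWithin] with t ht
          have ht0 : (0:ℝ) < t := ht
          simp only [Function.comp_apply]
          rw [Real.inv_rpow ht0.le, ← Real.rpow_neg ht0.le]
          congr 1
          ring
        have h3 : Tendsto (fun t : ℝ => (t ^ ((2:ℝ) - δ - 1) - 1) * ((2:ℝ) - δ - 1)⁻¹)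
            (nhdsWithin (0:ℝ) (Ioi 0)) atBot :=
          Filter.Tendsto.atTop_mul_const_of_neg (inv_lt_zero.2 hmlt)
            (tendsto_atTop_add_const_right _ (-1) hpow |>.congr (fun x => by ring))
        apply h3.congr
        intro t
        rw [ellm, if_neg hm1, div_eq_mul_inv]
    exact (hell.const_mul_atBot (by positivity : 0 < 1 / φ 1)).congr (fun t => rfl)
end

section
/- Let N, N' ∈ (-∞,0) ∪ [1,∞] and set m = (N-1)/N, m' = (N'-1)/N' (with m = 1 when N = ∞). If m < m', then DC_{N'} ⊂ DC_N; i.e., every continuous convex function u:[0,∞)→ℝ with u(0)=0 whose associated ψ_{N'} is convex also has ψ_N convex. -/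
open Set

noncomputable def psiN (N : ℝ) (u : ℝ → ℝ) (r : ℝ) : ℝ := r ^ N * u (r ^ (-N))

noncomputable def psiInf (u : ℝ → ℝ) (r : ℝ) : ℝ := Real.exp r * u (Real.exp (-r))

/-- Membership in the displacement convexity class `DC_N`, parametrized by
`m = (N-1)/N ∈ [0,∞)` (so `N = 1/(1-m)`, with `m = 1` corresponding to `N = ∞`):
`u : [0,∞) → ℝ` continuous, convex, `u(0) = 0`, and `ψ_N` convex. -/
def memDC (m : ℝ) (u : ℝ → ℝ) : Prop :=
  ContinuousOn u (Set.Ici 0) ∧ ConvexOn ℝ (Set.Ici 0) u ∧ u 0 = 0 ∧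
    (if m = 1 then ConvexOn ℝ Set.univ (psiInf u)
      else ConvexOn ℝ (Set.Ioi 0) (psiN (1 / (1 - m)) u))

/- ### Auxiliary lemmas -/

private lemma convexOn_congr {s : Set ℝ} {f g : ℝ → ℝ} (hf : ConvexOn ℝ s f)
    (h : ∀ x ∈ s, f x = g x) : ConvexOn ℝ s g := by
  refine ⟨hf.1, fun x hx y hy a b ha hb hab => ?_⟩
  rw [← h x hx, ← h y hy, ← h _ (hf.1 hx hy ha hb hab)]
  exact hf.2 hx hy ha hb hab

/-- convex monotone ∘ convex is convex -/
private lemma compCM {s t : Set ℝ} {f g : ℝ → ℝ} (hs : Convex ℝ s)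
    (hg : ConvexOn ℝ t g) (hgm : MonotoneOn g t) (hf : ConvexOn ℝ s f)
    (hmap : ∀ x ∈ s, f x ∈ t) : ConvexOn ℝ s (fun x => g (f x)) := by
  refine ⟨hs, fun x hx y hy a b ha hb hab => ?_⟩
  have h1 : f (a • x + b • y) ≤ a • f x + b • f y := hf.2 hx hy ha hb hab
  have h2 : a • f x + b • f y ∈ t := hg.1 (hmap x hx) (hmap y hy) ha hb hab
  have h3 : f (a • x + b • y) ∈ t := hmap _ (hs hx hy ha hb hab)
  calc g (f (a • x + b • y)) ≤ g (a • f x + b • f y) := hgm h3 h2 h1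
    _ ≤ a • g (f x) + b • g (f y) := hg.2 (hmap x hx) (hmap y hy) ha hb hab

/-- convex antitone ∘ concave is convex -/
private lemma compCA {s t : Set ℝ} {f g : ℝ → ℝ} (hs : Convex ℝ s)
    (hg : ConvexOn ℝ t g) (hga : AntitoneOn g t) (hf : ConcaveOn ℝ s f)
    (hmap : ∀ x ∈ s, f x ∈ t) : ConvexOn ℝ s (fun x => g (f x)) := by
  refine ⟨hs, fun x hx y hy a b ha hb hab => ?_⟩
  have h1 : a • f x + b • f y ≤ f (a • x + b • y) := hf.2 hx hy ha hb hab
  have h2 : a • f x + b • f y ∈ t := hg.1 (hmap x hx) (hmap y hy) ha hb hab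
  have h3 : f (a • x + b • y) ∈ t := hmap _ (hs hx hy ha hb hab)
  calc g (f (a • x + b • y)) ≤ g (a • f x + b • f y) := hga h2 h3 h1
    _ ≤ a • g (f x) + b • g (f y) := hg.2 (hmap x hx) (hmap y hy) ha hb hab

/-- For `u` convex with `u 0 = 0`, the slope `x ↦ u x / x` is monotone on `(0,∞)`. -/
private lemma monoF {u : ℝ → ℝ} (hconv : ConvexOn ℝ (Ici 0) u) (h0 : u 0 = 0) :
    MonotoneOn (fun x => u x / x) (Ioi 0) := by
  intro x hx y hy hxy
  have hx0 : (0:ℝ) < x := hx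
  have hy0 : (0:ℝ) < y := hy
  have hb : 0 ≤ x / y := by positivity
  have ha : 0 ≤ 1 - x / y := by
    have : x / y ≤ 1 := (div_le_one hy0).2 hxy
    linarith
  have key := hconv.2 (self_mem_Ici)
    (show y ∈ Ici 0 from hy0.le) ha hb (by ring)
  rw [smul_eq_mul, smul_eq_mul, smul_eq_mul, smul_eq_mul, mul_zero, zero_add,
    div_mul_cancel₀ _ hy0.ne', h0, mul_zero, zero_add] at key
  -- key : u x ≤ x / y * u y
  rw [div_le_div_iff₀ hx0 hy0]
  calc u x * y ≤ (x / y * u y) * y := mul_le_mul_of_nonneg_right key hy0.le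
    _ = u y * x := by field_simp

private lemma psiN_eq {u : ℝ → ℝ} {N r : ℝ} (hr : 0 < r) :
    psiN N u r = u (r ^ (-N)) / (r ^ (-N)) := by
  unfold psiN
  rw [Real.rpow_neg hr.le]
  field_simp

private lemma psiInf_eq (u : ℝ → ℝ) (s : ℝ) :
    psiInf u s = u (Real.exp (-s)) / Real.exp (-s) := by
  unfold psiInf
  rw [Real.exp_neg]
  field_simp

private lemma psiN_anti {u : ℝ → ℝ} (hconv : ConvexOn ℝ (Ici 0) u) (h0 : u 0 = 0)
    {N : ℝ} (hN : 0 < N) : AntitoneOn (psiN N u) (Ioi 0) := by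
  intro x hx y hy hxy
  rw [psiN_eq hx, psiN_eq hy]
  exact monoF hconv h0 (Real.rpow_pos_of_pos hy _) (Real.rpow_pos_of_pos hx _)
    (Real.rpow_le_rpow_of_nonpos hx hxy (by linarith))

private lemma psiN_mono {u : ℝ → ℝ} (hconv : ConvexOn ℝ (Ici 0) u) (h0 : u 0 = 0)
    {N : ℝ} (hN : N < 0) : MonotoneOn (psiN N u) (Ioi 0) := by
  intro x hx y hy hxy
  rw [psiN_eq hx, psiN_eq hy]
  exact monoF hconv h0 (Real.rpow_pos_of_pos hx _) (Real.rpow_pos_of_pos hy _)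
    (Real.rpow_le_rpow (le_of_lt hx) hxy (by linarith))

private lemma psiInf_anti {u : ℝ → ℝ} (hconv : ConvexOn ℝ (Ici 0) u) (h0 : u 0 = 0) :
    AntitoneOn (psiInf u) univ := by
  intro x _ y _ hxy
  rw [psiInf_eq, psiInf_eq]
  exact monoF hconv h0 (Real.exp_pos _) (Real.exp_pos _)
    (Real.exp_le_exp.2 (by linarith))

private lemma convexOn_exp_mul (c : ℝ) :
    ConvexOn ℝ univ (fun s : ℝ => Real.exp (c * s)) := by
  refine ⟨convex_univ, fun x _ y _ a b ha hb hab => ?_⟩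
  have h := convexOn_exp.2 (mem_univ (c * x)) (mem_univ (c * y)) ha hb hab
  simp only [smul_eq_mul] at h ⊢
  calc Real.exp (c * (a * x + b * y)) = Real.exp (a * (c * x) + b * (c * y)) := by
        rw [show c * (a * x + b * y) = a * (c * x) + b * (c * y) from by ring]
    _ ≤ a * Real.exp (c * x) + b * Real.exp (c * y) := h

private lemma convexOn_rpow_neg {p : ℝ} (hp : p ≤ 0) :
    ConvexOn ℝ (Ioi 0) (fun x : ℝ => x ^ p) := by
  have h1 : ConvexOn ℝ (Ioi 0) (-Real.log) := strictConcaveOn_log_Ioi.concaveOn.neg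
  have h2 := h1.smul (neg_nonneg.2 hp)
  have hlog : ConvexOn ℝ (Ioi 0) (fun x => p * Real.log x) :=
    convexOn_congr h2 (fun x _ => by simp only [Pi.neg_apply, smul_eq_mul]; ring)
  have hcomp := compCM (convex_Ioi 0) convexOn_exp (Real.exp_monotone.monotoneOn _)
    hlog (fun x _ => mem_univ _)
  exact convexOn_congr hcomp
    (fun x hx => by rw [mul_comm, ← Real.rpow_def_of_pos hx])

private lemma psiN_comp_rpow {u : ℝ → ℝ} {N N' r : ℝ} (hN' : N' ≠ 0) (hr : 0 < r) :
    psiN N' u (r ^ (N / N')) = psiN N u r := by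
  unfold psiN
  rw [← Real.rpow_mul hr.le, ← Real.rpow_mul hr.le,
    div_mul_cancel₀ _ hN', show N / N' * (-N') = -N from by field_simp]

private lemma psiInf_comp {u : ℝ → ℝ} {N r : ℝ} (hr : 0 < r) :
    psiInf u (N * Real.log r) = psiN N u r := by
  unfold psiN psiInf
  rw [Real.rpow_def_of_pos hr, Real.rpow_def_of_pos hr, mul_comm N (Real.log r),
    show Real.log r * -N = -(Real.log r * N) from by ring]

private lemma psiN_comp_exp {u : ℝ → ℝ} {N' : ℝ} (hN' : N' ≠ 0) (s : ℝ) :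
    psiN N' u (Real.exp (1 / N' * s)) = psiInf u s := by
  unfold psiN psiInf
  rw [Real.rpow_def_of_pos (Real.exp_pos _), Real.rpow_def_of_pos (Real.exp_pos _),
    Real.log_exp, show 1 / N' * s * N' = s from by field_simp,
    show 1 / N' * s * -N' = -s from by field_simp]

/-- Monotonicity of the displacement convexity classes in `m = (N-1)/N`:
if `0 ≤ m < m'` then `DC_{N'} ⊂ DC_N`. -/
theorem stmt7 (m m' : ℝ) (hm : 0 ≤ m) (hmm : m < m') (u : ℝ → ℝ)
    (h : memDC m' u) : memDC m u := by
  obtain ⟨hc, hconv, h0, hpsi⟩ := h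
  refine ⟨hc, hconv, h0, ?_⟩
  by_cases hm1 : m = 1
  · -- m = 1, so m' > 1
    subst hm1
    have hm'1 : m' ≠ 1 := by linarith
    rw [if_neg hm'1] at hpsi
    rw [if_pos rfl]
    set N' := 1 / (1 - m') with hN'def
    have hN' : N' < 0 := div_neg_of_pos_of_neg one_pos (by linarith)
    have hcomp := compCM convex_univ hpsi (psiN_mono hconv h0 hN')
      (convexOn_exp_mul (1 / N')) (fun x _ => Real.exp_pos _)
    exact convexOn_congr hcomp (fun s _ => psiN_comp_exp hN'.ne s)
  · rw [if_neg hm1]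
    set N := 1 / (1 - m) with hNdef
    by_cases hm'1 : m' = 1
    · -- m < 1 = m'
      subst hm'1
      rw [if_pos rfl] at hpsi
      have hmlt : m < 1 := hmm
      have h1m : 0 < 1 - m := by linarith
      have hNpos : 0 < N := div_pos one_pos h1m
      have hconcave : ConcaveOn ℝ (Ioi 0) (fun r : ℝ => N * Real.log r) :=
        strictConcaveOn_log_Ioi.concaveOn.smul hNpos.le
      have hcomp := compCA (convex_Ioi 0) hpsi (psiInf_anti hconv h0)
        hconcave (fun x _ => mem_univ _)
      exact convexOn_congr hcomp (fun r hr => psiInf_comp hr)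
    · rw [if_neg hm'1] at hpsi
      set N' := 1 / (1 - m') with hN'def
      have hα : N / N' = (1 - m') / (1 - m) := by
        rw [hNdef, hN'def, div_div_div_comm, div_one, one_div_div]
      rcases lt_or_gt_of_ne hm'1 with hlt | hgt
      · -- 0 ≤ m < m' < 1
        have hmlt : m < 1 := hmm.trans hlt
        have h1m : 0 < 1 - m := by linarith
        have h1m' : 0 < 1 - m' := by linarith
        have hN'pos : 0 < N' := div_pos one_pos h1m'
        have hα0 : 0 < N / N' := by rw [hα]; positivity
        have hα1 : N / N' < 1 := by rw [hα, div_lt_one h1m]; linarith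
        have hconc : ConcaveOn ℝ (Ioi 0) (fun r : ℝ => r ^ (N / N')) :=
          ((Real.strictConcaveOn_rpow hα0 hα1).concaveOn).subset
            Ioi_subset_Ici_self (convex_Ioi 0)
        have hcomp := compCA (convex_Ioi 0) hpsi (psiN_anti hconv h0 hN'pos)
          hconc (fun x hx => Real.rpow_pos_of_pos hx _)
        exact convexOn_congr hcomp (fun r hr => psiN_comp_rpow hN'pos.ne' hr)
      · -- m' > 1
        have h1m' : 1 - m' < 0 := by linarith
        have hN'neg : N' < 0 := div_neg_of_pos_of_neg one_pos h1m'
        rcases lt_or_gt_of_ne hm1 with hmlt | hmgt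
        · -- m < 1 < m'
          have h1m : 0 < 1 - m := by linarith
          have hconvpow : ConvexOn ℝ (Ioi 0) (fun r : ℝ => r ^ (N / N')) :=
            convexOn_rpow_neg (by rw [hα]; exact div_nonpos_of_nonpos_of_nonneg h1m'.le h1m.le)
          have hcomp := compCM (convex_Ioi 0) hpsi (psiN_mono hconv h0 hN'neg)
            hconvpow (fun x hx => Real.rpow_pos_of_pos hx _)
          exact convexOn_congr hcomp (fun r hr => psiN_comp_rpow hN'neg.ne hr)
        · -- 1 < m < m'
          have h1m : 1 - m < 0 := by linarith
          have hα1 : 1 ≤ N / N' := by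
            rw [hα]
            rw [le_div_iff_of_neg h1m]
            linarith
          have hconvpow : ConvexOn ℝ (Ioi 0) (fun r : ℝ => r ^ (N / N')) :=
            (convexOn_rpow hα1).subset Ioi_subset_Ici_self (convex_Ioi 0)
          have hcomp := compCM (convex_Ioi 0) hpsi (psiN_mono hconv h0 hN'neg)
            hconvpow (fun x hx => Real.rpow_pos_of_pos hx _)
          exact convexOn_congr hcomp (fun r hr => psiN_comp_rpow hN'neg.ne hr)
end

section
/- Let φ:(0,∞)→(0,∞) be non-decreasing, positive, continuous, satisfying the integrability condition ensuring u_φ is well-defined. For N ∈ (-∞,0) ∪ (1,∞], the function ψ_N(r) = r^N u_φ(r^{-N}) (or e^r u_φ(e^{-r}) when N=∞) is convex if and only if for all t > 0: ∫₀^t s/φ(s) ds ≤ (N/(N-1)) · t²/φ(t), where N/(N-1) := 1 for N = ∞. -/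
open Set MeasureTheory Filter

/-- `u_φ(r) = ∫₀^r ln_φ(t) dt`. -/
noncomputable def uphi (φ : ℝ → ℝ) (r : ℝ) : ℝ := ∫ t in (0:ℝ)..r, lnphi φ t

noncomputable def Gf (φ : ℝ → ℝ) (t : ℝ) : ℝ := ∫ s in (0:ℝ)..t, s / φ s

lemma inv_phi_contOn {φ : ℝ → ℝ} (hpos : ∀ s > (0:ℝ), 0 < φ s)
    (hcont : ContinuousOn φ (Ioi 0)) : ContinuousOn (fun s => 1 / φ s) (Ioi 0) :=
  continuousOn_const.div hcont (fun s hs => ne_of_gt (hpos s hs))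

lemma s_div_phi_contOn {φ : ℝ → ℝ} (hpos : ∀ s > (0:ℝ), 0 < φ s)
    (hcont : ContinuousOn φ (Ioi 0)) : ContinuousOn (fun s => s / φ s) (Ioi 0) :=
  continuousOn_id.div hcont (fun s hs => ne_of_gt (hpos s hs))

lemma uIcc_subset_Ioi {a b : ℝ} (ha : 0 < a) (hb : 0 < b) : uIcc a b ⊆ Ioi 0 := by
  intro x hx
  rcases le_total a b with h | h
  · rw [uIcc_of_le h] at hx; exact lt_of_lt_of_le ha hx.1
  · rw [uIcc_of_ge h] at hx; exact lt_of_lt_of_le hb hx.1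

lemma lnphi_hasDerivAt {φ : ℝ → ℝ} (hpos : ∀ s > (0:ℝ), 0 < φ s)
    (hcont : ContinuousOn φ (Ioi 0)) {t : ℝ} (ht : 0 < t) :
    HasDerivAt (lnphi φ) (1 / φ t) t := by
  have hc := inv_phi_contOn hpos hcont
  have hii : IntervalIntegrable (fun s => 1 / φ s) volume 1 t :=
    (hc.mono (uIcc_subset_Ioi one_pos ht)).intervalIntegrable
  have hca : ContinuousAt (fun s => 1 / φ s) t := hc.continuousAt (Ioi_mem_nhds ht)
  exact intervalIntegral.integral_hasDerivAt_right hii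
    (hc.stronglyMeasurableAtFilter isOpen_Ioi t ht) hca

lemma Gf_hasDerivAt {φ : ℝ → ℝ} (hpos : ∀ s > (0:ℝ), 0 < φ s)
    (hcont : ContinuousOn φ (Ioi 0))
    (hint : ∀ t > (0:ℝ), IntervalIntegrable (fun s => s / φ s) MeasureTheory.volume 0 t)
    {t : ℝ} (ht : 0 < t) : HasDerivAt (Gf φ) (t / φ t) t := by
  have hc := s_div_phi_contOn hpos hcont
  exact intervalIntegral.integral_hasDerivAt_right (hint t ht)
    (hc.stronglyMeasurableAtFilter isOpen_Ioi t ht)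
    (hc.continuousAt (Ioi_mem_nhds ht))

lemma uphi_hasDerivAt {φ : ℝ → ℝ} (hpos : ∀ s > (0:ℝ), 0 < φ s)
    (hcont : ContinuousOn φ (Ioi 0))
    (huint : ∀ r ≥ (0:ℝ), IntervalIntegrable (lnphi φ) MeasureTheory.volume 0 r)
    {r : ℝ} (hr : 0 < r) : HasDerivAt (uphi φ) (lnphi φ r) r := by
  have hc : ContinuousOn (lnphi φ) (Ioi 0) := fun x hx =>
    ((lnphi_hasDerivAt hpos hcont hx).continuousAt).continuousWithinAt
  exact intervalIntegral.integral_hasDerivAt_right (huint r hr.le)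
    (hc.stronglyMeasurableAtFilter isOpen_Ioi r hr)
    (hc.continuousAt (Ioi_mem_nhds hr))

lemma primitive_tendsto_zero {f : ℝ → ℝ}
    (hii : IntervalIntegrable f volume 0 1) :
    Tendsto (fun t => ∫ s in (0:ℝ)..t, f s) (nhdsWithin 0 (Ioi 0)) (nhds 0) := by
  have hc : ContinuousOn (fun t => ∫ s in (0:ℝ)..t, f s) (uIcc (0:ℝ) 1) :=
    intervalIntegral.continuousOn_primitive_interval' hii left_mem_uIcc
  have h0 : (0:ℝ) ∈ uIcc (0:ℝ) 1 := left_mem_uIcc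
  have := (hc 0 h0).tendsto
  simp only [intervalIntegral.integral_same] at this
  refine this.mono_left (nhdsWithin_le_iff.mpr ?_)
  have : Ioo (0:ℝ) 1 ∈ nhdsWithin 0 (Ioi 0) := Ioo_mem_nhdsGT_of_mem (by norm_num)
  exact mem_of_superset this (by rw [uIcc_of_le zero_le_one]; exact Ioo_subset_Icc_self)

lemma Gf_tendsto_zero {φ : ℝ → ℝ}
    (hint : ∀ t > (0:ℝ), IntervalIntegrable (fun s => s / φ s) MeasureTheory.volume 0 t) :
    Tendsto (Gf φ) (nhdsWithin 0 (Ioi 0)) (nhds 0) :=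
  primitive_tendsto_zero (hint 1 one_pos)

lemma uphi_tendsto_zero {φ : ℝ → ℝ}
    (huint : ∀ r ≥ (0:ℝ), IntervalIntegrable (lnphi φ) MeasureTheory.volume 0 r) :
    Tendsto (uphi φ) (nhdsWithin 0 (Ioi 0)) (nhds 0) :=
  primitive_tendsto_zero (huint 1 zero_le_one)

lemma tL_tendsto_zero {φ : ℝ → ℝ} (hpos : ∀ s > (0:ℝ), 0 < φ s)
    (hcont : ContinuousOn φ (Ioi 0))
    (hint : ∀ t > (0:ℝ), IntervalIntegrable (fun s => s / φ s) MeasureTheory.volume 0 t) :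
    Tendsto (fun t => t * lnphi φ t) (nhdsWithin 0 (Ioi 0)) (nhds 0) := by
  have hGc := s_div_phi_contOn hpos hcont
  have hIc := inv_phi_contOn hpos hcont
  -- the bound on Ioo 0 1
  have key : ∀ t ∈ Ioo (0:ℝ) 1,
      -(Gf φ (Real.sqrt t) + Real.sqrt t * Gf φ 1) ≤ t * lnphi φ t ∧ t * lnphi φ t ≤ 0 := by
    intro t ht
    obtain ⟨ht0, ht1⟩ := ht
    have hst0 : 0 < Real.sqrt t := Real.sqrt_pos.mpr ht0
    have htst : t ≤ Real.sqrt t := by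
      nlinarith [Real.sq_sqrt ht0.le, Real.sqrt_nonneg t]
    have hst1 : Real.sqrt t ≤ 1 := by
      nlinarith [Real.sq_sqrt ht0.le, Real.sqrt_nonneg t]
    have hLt : lnphi φ t = -(∫ s in t..(1:ℝ), 1 / φ s) := by
      rw [lnphi, intervalIntegral.integral_symm]
    have hmul : t * lnphi φ t = -(∫ s in t..(1:ℝ), t / φ s) := by
      rw [hLt, mul_neg, ← intervalIntegral.integral_const_mul]
      congr 1
      apply intervalIntegral.integral_congr
      intro s _
      simp only [smul_eq_mul, mul_one_div]
    have hφt := hpos t ht0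
    have hii1 : IntervalIntegrable (fun s => t / φ s) volume t (Real.sqrt t) :=
      ((continuousOn_const.div hcont (fun s hs => ne_of_gt (hpos s hs))).mono
        (uIcc_subset_Ioi ht0 hst0)).intervalIntegrable
    have hii2 : IntervalIntegrable (fun s => t / φ s) volume (Real.sqrt t) 1 :=
      ((continuousOn_const.div hcont (fun s hs => ne_of_gt (hpos s hs))).mono
        (uIcc_subset_Ioi hst0 one_pos)).intervalIntegrable
    have hii3 : IntervalIntegrable (fun s => s / φ s) volume t (Real.sqrt t) :=
      (hGc.mono (uIcc_subset_Ioi ht0 hst0)).intervalIntegrable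
    have hii4 : IntervalIntegrable (fun s => s / φ s) volume (Real.sqrt t) 1 :=
      (hGc.mono (uIcc_subset_Ioi hst0 one_pos)).intervalIntegrable
    have hii5 : IntervalIntegrable (fun s => Real.sqrt t * (s / φ s)) volume (Real.sqrt t) 1 :=
      hii4.const_mul _
    have hGnonneg : ∀ x > (0:ℝ), 0 ≤ Gf φ x := by
      intro x hx
      apply intervalIntegral.integral_nonneg hx.le
      intro u hu
      rcases eq_or_lt_of_le hu.1 with h | h
      · simp [← h]
      · exact (div_nonneg (le_of_lt h) (hpos u h).le)
    have hsplit : (∫ s in t..(1:ℝ), t / φ s) =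
        (∫ s in t..Real.sqrt t, t / φ s) + ∫ s in Real.sqrt t..(1:ℝ), t / φ s :=
      (intervalIntegral.integral_add_adjacent_intervals hii1 hii2).symm
    have hG1 : Gf φ (Real.sqrt t) = Gf φ t + ∫ s in t..Real.sqrt t, s / φ s :=
      (intervalIntegral.integral_add_adjacent_intervals (hint t ht0) hii3).symm
    have hG2 : Gf φ 1 = Gf φ (Real.sqrt t) + ∫ s in Real.sqrt t..(1:ℝ), s / φ s :=
      (intervalIntegral.integral_add_adjacent_intervals (hint _ hst0) hii4).symm
    have b1 : (∫ s in t..Real.sqrt t, t / φ s) ≤ ∫ s in t..Real.sqrt t, s / φ s := by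
      apply intervalIntegral.integral_mono_on htst hii1 hii3
      intro u hu
      have hu0 : 0 < u := lt_of_lt_of_le ht0 hu.1
      exact (div_le_div_iff_of_pos_right (hpos u hu0)).mpr hu.1
    have b3 : (∫ s in Real.sqrt t..(1:ℝ), t / φ s) ≤
        ∫ s in Real.sqrt t..(1:ℝ), Real.sqrt t * (s / φ s) := by
      apply intervalIntegral.integral_mono_on hst1 hii2 hii5
      intro u hu
      have hu0 : 0 < u := lt_of_lt_of_le hst0 hu.1
      rw [← mul_div_assoc]
      apply (div_le_div_iff_of_pos_right (hpos u hu0)).mpr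
      calc t = Real.sqrt t * Real.sqrt t := (Real.mul_self_sqrt ht0.le).symm
      _ ≤ Real.sqrt t * u := mul_le_mul_of_nonneg_left hu.1 hst0.le
    have b4 : (∫ s in Real.sqrt t..(1:ℝ), Real.sqrt t * (s / φ s)) ≤ Real.sqrt t * Gf φ 1 := by
      rw [intervalIntegral.integral_const_mul]
      have : (∫ s in Real.sqrt t..(1:ℝ), s / φ s) ≤ Gf φ 1 := by
        have := hGnonneg _ hst0
        linarith [hG2]
      nlinarith
    have hup : (0:ℝ) ≤ ∫ s in t..(1:ℝ), t / φ s := by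
      apply intervalIntegral.integral_nonneg ht1.le
      intro u hu
      have hu0 : 0 < u := lt_of_lt_of_le ht0 hu.1
      exact div_nonneg ht0.le (hpos u hu0).le
    constructor
    · rw [hmul, neg_le_neg_iff]
      have hGt := hGnonneg t ht0
      calc (∫ s in t..(1:ℝ), t / φ s)
          = (∫ s in t..Real.sqrt t, t / φ s) + ∫ s in Real.sqrt t..(1:ℝ), t / φ s := hsplit
        _ ≤ Gf φ (Real.sqrt t) + Real.sqrt t * Gf φ 1 := by
            have : (∫ s in t..Real.sqrt t, s / φ s) ≤ Gf φ (Real.sqrt t) := by linarith [hG1]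
            linarith [b1, b3, b4]
    · rw [hmul]
      linarith
  -- squeeze
  have hsq : Tendsto Real.sqrt (nhdsWithin 0 (Ioi 0)) (nhdsWithin 0 (Ioi 0)) := by
    rw [tendsto_nhdsWithin_iff]
    constructor
    · have := Real.continuous_sqrt.tendsto 0
      rw [Real.sqrt_zero] at this
      exact this.mono_left nhdsWithin_le_nhds
    · filter_upwards [self_mem_nhdsWithin] with x hx
      exact Real.sqrt_pos.mpr hx
  have hg : Tendsto (fun t => -(Gf φ (Real.sqrt t) + Real.sqrt t * Gf φ 1))
      (nhdsWithin 0 (Ioi 0)) (nhds 0) := by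
    have h1 := (Gf_tendsto_zero hint).comp hsq
    have h2 : Tendsto (fun t => Real.sqrt t * Gf φ 1) (nhdsWithin 0 (Ioi 0)) (nhds 0) := by
      have := (hsq.mono_right nhdsWithin_le_nhds).mul_const (Gf φ 1)
      simpa using this
    have := (h1.add h2).neg
    simpa using this
  refine tendsto_of_tendsto_of_tendsto_of_le_of_le' hg tendsto_const_nhds ?_ ?_
  · filter_upwards [Ioo_mem_nhdsGT_of_mem (Set.mem_Ico.mpr ⟨le_refl 0, one_pos⟩)] with x hx
    exact (key x hx).1
  · filter_upwards [Ioo_mem_nhdsGT_of_mem (Set.mem_Ico.mpr ⟨le_refl 0, one_pos⟩)] with x hx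
    exact (key x hx).2

lemma uphi_key {φ : ℝ → ℝ} (hpos : ∀ s > (0:ℝ), 0 < φ s)
    (hcont : ContinuousOn φ (Ioi 0))
    (hint : ∀ t > (0:ℝ), IntervalIntegrable (fun s => s / φ s) MeasureTheory.volume 0 t)
    (huint : ∀ r ≥ (0:ℝ), IntervalIntegrable (lnphi φ) MeasureTheory.volume 0 r)
    {t : ℝ} (ht : 0 < t) :
    uphi φ t = t * lnphi φ t - Gf φ t := by
  set H : ℝ → ℝ := fun x => uphi φ x - x * lnphi φ x + Gf φ x with hHdef
  have hH : ∀ x, 0 < x → HasDerivAt H 0 x := by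
    intro x hx
    have h1 := uphi_hasDerivAt hpos hcont huint hx
    have h2 := (hasDerivAt_id x).mul (lnphi_hasDerivAt hpos hcont hx)
    have h3 := Gf_hasDerivAt hpos hcont hint hx
    have := (h1.sub h2).add h3
    refine this.congr_deriv (Eq.symm ?_)
    simp only [id_eq, one_mul, mul_one_div]
    ring
  have hconst : ∀ s ∈ Ioc (0:ℝ) t, H t = H s := by
    intro s hs
    have := constant_of_has_deriv_right_zero
      (f := H) (a := s) (b := t)
      (fun x hx => ((hH x (lt_of_lt_of_le hs.1 hx.1)).continuousAt).continuousWithinAt)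
      (fun x hx => ((hH x (lt_of_lt_of_le hs.1 hx.1)).hasDerivWithinAt))
    exact this t (right_mem_Icc.mpr hs.2)
  have hlim : Tendsto H (nhdsWithin 0 (Ioi 0)) (nhds 0) := by
    have := ((uphi_tendsto_zero huint).sub (tL_tendsto_zero hpos hcont hint)).add
      (Gf_tendsto_zero hint)
    simpa using this
  have hlim2 : Tendsto H (nhdsWithin 0 (Ioi 0)) (nhds (H t)) := by
    apply Tendsto.congr' _ tendsto_const_nhds
    filter_upwards [Ioc_mem_nhdsGT_of_mem (Set.mem_Ico.mpr ⟨le_refl 0, ht⟩)] with s hs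
    exact hconst s hs
  have h0 : H t = 0 := tendsto_nhds_unique hlim2 hlim
  have : uphi φ t - t * lnphi φ t + Gf φ t = 0 := h0
  linarith

lemma deriv_nonneg_of_monotoneOn {g : ℝ → ℝ} {s : Set ℝ} (hso : IsOpen s)
    (hm : MonotoneOn g s) {x d : ℝ} (hx : x ∈ s) (hd : HasDerivAt g d x) : 0 ≤ d := by
  have h := hd.hasDerivWithinAt (s := Ioi x)
  rw [hasDerivWithinAt_iff_tendsto_slope] at h
  have hdiff : Ioi x \ {x} = Ioi x := Set.diff_singleton_eq_self (fun hmem => lt_irrefl x hmem)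
  rw [hdiff] at h
  refine ge_of_tendsto h ?_
  filter_upwards [self_mem_nhdsWithin,
    mem_nhdsWithin_of_mem_nhds (hso.mem_nhds hx)] with y hy hys
  rw [slope_def_field]
  have hxy : x < y := hy
  exact div_nonneg (sub_nonneg.mpr (hm hx hys hxy.le)) (sub_nonneg.mpr hxy.le)

lemma convexOn_iff_snd_deriv_nonneg {s : Set ℝ} (hs : Convex ℝ s) (hso : IsOpen s)
    {f f' f'' : ℝ → ℝ} (hf' : ∀ x ∈ s, HasDerivAt f (f' x) x)
    (hf'' : ∀ x ∈ s, HasDerivAt f' (f'' x) x) :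
    ConvexOn ℝ s f ↔ ∀ x ∈ s, 0 ≤ f'' x := by
  constructor
  · intro hc x hx
    have hdiff : ∀ y ∈ s, DifferentiableAt ℝ f y := fun y hy => (hf' y hy).differentiableAt
    have hmono := hc.monotoneOn_deriv hdiff
    have hmono' : MonotoneOn f' s := by
      intro a ha b hb hab
      have := hmono ha hb hab
      rwa [(hf' a ha).deriv, (hf' b hb).deriv] at this
    exact deriv_nonneg_of_monotoneOn hso hmono' hx (hf'' x hx)
  · intro h
    apply convexOn_of_hasDerivWithinAt2_nonneg hs (f' := f') (f'' := f'')
    · exact fun x hx => (hf' x hx).continuousAt.continuousWithinAt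
    · rw [hso.interior_eq]
      exact fun x hx => (hf' x hx).hasDerivWithinAt
    · rw [hso.interior_eq]
      exact fun x hx => (hf'' x hx).hasDerivWithinAt
    · rw [hso.interior_eq]
      exact h

lemma psiN_hasDerivAt {φ : ℝ → ℝ} (hpos : ∀ s > (0:ℝ), 0 < φ s)
    (hcont : ContinuousOn φ (Ioi 0))
    (hint : ∀ t > (0:ℝ), IntervalIntegrable (fun s => s / φ s) MeasureTheory.volume 0 t)
    (huint : ∀ r ≥ (0:ℝ), IntervalIntegrable (lnphi φ) MeasureTheory.volume 0 r)
    {N r : ℝ} (hr : 0 < r) :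
    HasDerivAt (psiN N (uphi φ)) (-N * r ^ (N-1) * Gf φ (r ^ (-N))) r := by
  have hx : (0:ℝ) < r ^ (-N) := Real.rpow_pos_of_pos hr _
  have h1 : HasDerivAt (fun r : ℝ => r ^ N) (N * r ^ (N-1)) r :=
    Real.hasDerivAt_rpow_const (Or.inl hr.ne')
  have hxd : HasDerivAt (fun r : ℝ => r ^ (-N)) (-N * r ^ (-N-1)) r :=
    Real.hasDerivAt_rpow_const (Or.inl hr.ne')
  have h2 : HasDerivAt (fun r : ℝ => uphi φ (r ^ (-N)))
      (lnphi φ (r ^ (-N)) * (-N * r ^ (-N-1))) r :=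
    HasDerivAt.comp (h₂ := uphi φ) r (uphi_hasDerivAt hpos hcont huint hx) hxd
  have hprod := h1.mul h2
  have : psiN N (uphi φ) = fun r : ℝ => r ^ N * uphi φ (r ^ (-N)) := rfl
  rw [this]
  refine hprod.congr_deriv (Eq.symm ?_)
  rw [uphi_key hpos hcont hint huint hx]
  have e1 : r ^ (N-1) * r ^ (-N) = r ^ (-1:ℝ) := by
    rw [← Real.rpow_add hr]; ring_nf
  have e2 : r ^ N * r ^ (-N-1) = r ^ (-1:ℝ) := by
    rw [← Real.rpow_add hr]; ring_nf
  linear_combination (N * lnphi φ (r ^ (-N))) * e2 - (N * lnphi φ (r ^ (-N))) * e1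

lemma psiN_deriv2 {φ : ℝ → ℝ} (hpos : ∀ s > (0:ℝ), 0 < φ s)
    (hcont : ContinuousOn φ (Ioi 0))
    (hint : ∀ t > (0:ℝ), IntervalIntegrable (fun s => s / φ s) MeasureTheory.volume 0 t)
    {N r : ℝ} (hN : N ≠ 1) (hr : 0 < r) :
    HasDerivAt (fun r : ℝ => -N * r ^ (N-1) * Gf φ (r ^ (-N)))
      (N * (N-1) * r ^ (N-2) *
        (N / (N-1) * ((r ^ (-N)) ^ 2 / φ (r ^ (-N))) - Gf φ (r ^ (-N)))) r := by
  have hx : (0:ℝ) < r ^ (-N) := Real.rpow_pos_of_pos hr _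
  have hφx : (0:ℝ) < φ (r ^ (-N)) := hpos _ hx
  have h1 : HasDerivAt (fun r : ℝ => -N * r ^ (N-1)) (-N * ((N-1) * r ^ (N-2))) r := by
    have h := (Real.hasDerivAt_rpow_const (x := r) (p := N-1) (Or.inl hr.ne')).const_mul (-N)
    rw [show N - 1 - 1 = N - 2 by ring] at h
    exact h
  have hxd : HasDerivAt (fun r : ℝ => r ^ (-N)) (-N * r ^ (-N-1)) r :=
    Real.hasDerivAt_rpow_const (Or.inl hr.ne')
  have h2 : HasDerivAt (fun r : ℝ => Gf φ (r ^ (-N)))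
      ((r ^ (-N) / φ (r ^ (-N))) * (-N * r ^ (-N-1))) r :=
    HasDerivAt.comp (h₂ := Gf φ) r (Gf_hasDerivAt hpos hcont hint hx) hxd
  have hprod := h1.mul h2
  refine hprod.congr_deriv (Eq.symm ?_)
  have e3 : r ^ (N-1) * r ^ (-N-1) = r ^ (-2:ℝ) := by
    rw [← Real.rpow_add hr]; ring_nf
  have e4 : r ^ (N-2) * ((r ^ (-N)) ^ 2) = r ^ (-2:ℝ) * r ^ (-N) := by
    rw [sq, ← Real.rpow_add hr, ← Real.rpow_add hr, ← Real.rpow_add hr]; ring_nf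
  have hN1 : N - 1 ≠ 0 := sub_ne_zero.mpr hN
  have hNN : N * (N-1) * (N / (N-1)) = N ^ 2 := by
    field_simp
  linear_combination (r ^ (N-2) * (r ^ (-N)) ^ 2 / φ (r ^ (-N))) * hNN
    + (N^2 / φ (r ^ (-N))) * e4 - (N^2 * r ^ (-N) / φ (r ^ (-N))) * e3

lemma psiInf_hasDerivAt {φ : ℝ → ℝ} (hpos : ∀ s > (0:ℝ), 0 < φ s)
    (hcont : ContinuousOn φ (Ioi 0))
    (hint : ∀ t > (0:ℝ), IntervalIntegrable (fun s => s / φ s) MeasureTheory.volume 0 t)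
    (huint : ∀ r ≥ (0:ℝ), IntervalIntegrable (lnphi φ) MeasureTheory.volume 0 r)
    (r : ℝ) :
    HasDerivAt (psiInf (uphi φ)) (-Real.exp r * Gf φ (Real.exp (-r))) r := by
  have hx : (0:ℝ) < Real.exp (-r) := Real.exp_pos _
  have hxd : HasDerivAt (fun r : ℝ => Real.exp (-r)) (-Real.exp (-r)) r := by
    have h := (Real.hasDerivAt_exp (-r)).comp r ((hasDerivAt_id r).neg)
    simpa using (show HasDerivAt (fun r : ℝ => Real.exp (-r)) _ r from h)
  have h2 : HasDerivAt (fun r : ℝ => uphi φ (Real.exp (-r)))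
      (lnphi φ (Real.exp (-r)) * -Real.exp (-r)) r :=
    HasDerivAt.comp (h₂ := uphi φ) r (uphi_hasDerivAt hpos hcont huint hx) hxd
  have hprod := (Real.hasDerivAt_exp r).mul h2
  have : psiInf (uphi φ) = fun r : ℝ => Real.exp r * uphi φ (Real.exp (-r)) := rfl
  rw [this]
  refine hprod.congr_deriv (Eq.symm ?_)
  rw [uphi_key hpos hcont hint huint hx]
  ring

lemma psiInf_deriv2 {φ : ℝ → ℝ} (hpos : ∀ s > (0:ℝ), 0 < φ s)
    (hcont : ContinuousOn φ (Ioi 0))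
    (hint : ∀ t > (0:ℝ), IntervalIntegrable (fun s => s / φ s) MeasureTheory.volume 0 t)
    (r : ℝ) :
    HasDerivAt (fun r : ℝ => -Real.exp r * Gf φ (Real.exp (-r)))
      (Real.exp r * ((Real.exp (-r)) ^ 2 / φ (Real.exp (-r)) - Gf φ (Real.exp (-r)))) r := by
  have hx : (0:ℝ) < Real.exp (-r) := Real.exp_pos _
  have hxd : HasDerivAt (fun r : ℝ => Real.exp (-r)) (-Real.exp (-r)) r := by
    have h := (Real.hasDerivAt_exp (-r)).comp r ((hasDerivAt_id r).neg)
    simpa using (show HasDerivAt (fun r : ℝ => Real.exp (-r)) _ r from h)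
  have h2 : HasDerivAt (fun r : ℝ => Gf φ (Real.exp (-r)))
      ((Real.exp (-r) / φ (Real.exp (-r))) * -Real.exp (-r)) r :=
    HasDerivAt.comp (h₂ := Gf φ) r (Gf_hasDerivAt hpos hcont hint hx) hxd
  have hprod := ((Real.hasDerivAt_exp r).neg).mul h2
  refine hprod.congr_deriv (Eq.symm ?_)
  have hφx : φ (Real.exp (-r)) ≠ 0 := (hpos _ hx).ne'
  field_simp
  simp only [Pi.neg_apply]
  ring

lemma le_of_K_mul_nonneg {K A G : ℝ} (hK : 0 < K) (h : 0 ≤ K * (A - G)) : G ≤ A := by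
  nlinarith

/-- For `N ∈ (-∞,0) ∪ (1,∞]`, the function `ψ_N` associated with `u_φ` is convex
if and only if `∫₀^t s/φ(s) ds ≤ (N/(N-1)) · t²/φ(t)` for all `t > 0`
(with `N/(N-1) := 1` for `N = ∞`). -/
theorem stmt8 (φ : ℝ → ℝ)
    (hpos : ∀ s > (0:ℝ), 0 < φ s)
    (hmono : MonotoneOn φ (Ioi 0))
    (hcont : ContinuousOn φ (Ioi 0))
    (hint : ∀ t > (0:ℝ), IntervalIntegrable (fun s => s / φ s) MeasureTheory.volume 0 t)
    (huint : ∀ r ≥ (0:ℝ), IntervalIntegrable (lnphi φ) MeasureTheory.volume 0 r) :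
    (∀ N : ℝ, (N < 0 ∨ 1 < N) →
      (ConvexOn ℝ (Set.Ioi 0) (psiN N (uphi φ)) ↔
        ∀ t > (0:ℝ), (∫ s in (0:ℝ)..t, s / φ s) ≤ N / (N - 1) * (t ^ 2 / φ t))) ∧
    (ConvexOn ℝ Set.univ (psiInf (uphi φ)) ↔
      ∀ t > (0:ℝ), (∫ s in (0:ℝ)..t, s / φ s) ≤ t ^ 2 / φ t) := by
  constructor
  · intro N hN
    have hN0 : N ≠ 0 := by rcases hN with h | h <;> intro h0 <;> rw [h0] at h <;> linarith
    have hN1 : N ≠ 1 := by rcases hN with h | h <;> intro h0 <;> rw [h0] at h <;> linarith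
    have hNN1 : 0 < N * (N - 1) := by rcases hN with h | h <;> nlinarith
    have hiff := convexOn_iff_snd_deriv_nonneg (convex_Ioi (0:ℝ)) isOpen_Ioi
      (f := psiN N (uphi φ))
      (f' := fun r => -N * r ^ (N-1) * Gf φ (r ^ (-N)))
      (f'' := fun r => N * (N-1) * r ^ (N-2) *
        (N / (N-1) * ((r ^ (-N)) ^ 2 / φ (r ^ (-N))) - Gf φ (r ^ (-N))))
      (fun r hr => psiN_hasDerivAt hpos hcont hint huint hr)
      (fun r hr => psiN_deriv2 hpos hcont hint hN1 hr)
    rw [hiff]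
    constructor
    · intro h t ht
      set r := t ^ (-N⁻¹) with hrdef
      have hr : (0:ℝ) < r := Real.rpow_pos_of_pos ht _
      have hrt : r ^ (-N) = t := by
        rw [hrdef, ← Real.rpow_mul ht.le, show -N⁻¹ * -N = 1 by field_simp, Real.rpow_one]
      have hh := h r hr
      try dsimp only at hh
      rw [hrt] at hh
      have hpow : (0:ℝ) < r ^ (N-2:ℝ) := Real.rpow_pos_of_pos hr _
      exact le_of_K_mul_nonneg (mul_pos hNN1 hpow) hh
    · intro h r hr
      have hx : (0:ℝ) < r ^ (-N) := Real.rpow_pos_of_pos hr _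
      have hpow : (0:ℝ) < r ^ (N-2:ℝ) := Real.rpow_pos_of_pos hr _
      exact mul_nonneg (mul_pos hNN1 hpow).le (sub_nonneg.mpr (h _ hx))
  · have hiff := convexOn_iff_snd_deriv_nonneg (convex_univ (𝕜 := ℝ) (E := ℝ)) isOpen_univ
      (f := psiInf (uphi φ))
      (f' := fun r => -Real.exp r * Gf φ (Real.exp (-r)))
      (f'' := fun r => Real.exp r *
        ((Real.exp (-r)) ^ 2 / φ (Real.exp (-r)) - Gf φ (Real.exp (-r))))
      (fun r _ => psiInf_hasDerivAt hpos hcont hint huint r)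
      (fun r _ => psiInf_deriv2 hpos hcont hint r)
    rw [hiff]
    constructor
    · intro h t ht
      have hh := h (-Real.log t) (mem_univ _)
      try dsimp only at hh
      rw [neg_neg, Real.exp_log ht] at hh
      exact le_of_K_mul_nonneg (Real.exp_pos _) hh
    · intro h r _
      exact mul_nonneg (Real.exp_pos r).le (sub_nonneg.mpr (h _ (Real.exp_pos _)))
end

section
/- Let φ:(0,∞)→(0,∞) be non-decreasing, positive, continuous with ∫₀¹ s/φ(s) ds < ∞ and δ_φ < 2. If u_φ ∈ DC_N for some N ∈ (-∞,0) ∪ (1,∞], then δ_φ ≤ (N+1)/N (where (N+1)/N := 1 for N = ∞). -/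
open Set MeasureTheory Filter

section AuxLemmas

variable {φ u L Q : ℝ → ℝ}

lemma aux_mono {g : ℝ → ℝ} {S : Set ℝ} {c x : ℝ} (hm : MonotoneOn g S) (hS : S ∈ nhds x)
    (hd : HasDerivAt g c x) : 0 ≤ c := by
  rw [hasDerivAt_iff_tendsto_slope] at hd
  have hd' : Tendsto (slope g x) (nhdsWithin x (Ioi x)) (nhds c) :=
    hd.mono_left (nhdsWithin_mono x (fun y hy => ne_of_gt hy))
  apply ge_of_tendsto hd'
  have h1 : ∀ᶠ z in nhdsWithin x (Ioi x), z ∈ S :=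
    mem_nhdsWithin_of_mem_nhds hS
  have h2 : ∀ᶠ z in nhdsWithin x (Ioi x), z ∈ Ioi x := self_mem_nhdsWithin
  filter_upwards [h1, h2] with z hz hz'
  rw [slope_def_field]
  apply div_nonneg _ (by linarith [mem_Ioi.mp hz'])
  have := hm (mem_of_mem_nhds hS) hz (le_of_lt hz')
  linarith

lemma invphi_cont (hpos : ∀ s > (0:ℝ), 0 < φ s) (hcont : ContinuousOn φ (Ioi 0)) :
    ContinuousOn (fun s => 1 / φ s) (Ioi 0) :=
  ContinuousOn.div continuousOn_const hcont (fun x hx => (hpos x hx).ne')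

lemma lnphi_hasDeriv (hpos : ∀ s > (0:ℝ), 0 < φ s) (hcont : ContinuousOn φ (Ioi 0))
    {x : ℝ} (hx : 0 < x) : HasDerivAt (lnphi φ) (1 / φ x) x := by
  have hc := invphi_cont hpos hcont
  have hint : IntervalIntegrable (fun s => 1 / φ s) volume 1 x := by
    apply ContinuousOn.intervalIntegrable
    apply hc.mono
    intro y hy
    rcases le_or_gt 1 x with h | h
    · rw [uIcc_of_le h] at hy; exact lt_of_lt_of_le one_pos hy.1
    · rw [uIcc_of_ge h.le] at hy; exact lt_of_lt_of_le hx hy.1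
  exact intervalIntegral.integral_hasDerivAt_right hint
    (hc.stronglyMeasurableAtFilter isOpen_Ioi x hx)
    (hc.continuousAt (isOpen_Ioi.mem_nhds hx))

lemma lnphi_cont (hpos : ∀ s > (0:ℝ), 0 < φ s) (hcont : ContinuousOn φ (Ioi 0)) :
    ContinuousOn (lnphi φ) (Ioi 0) := fun x hx =>
  ((lnphi_hasDeriv hpos hcont hx).continuousAt).continuousWithinAt

lemma lnphi_one : lnphi φ 1 = 0 := intervalIntegral.integral_same

lemma lnphi_nonpos (hpos : ∀ s > (0:ℝ), 0 < φ s) (hcont : ContinuousOn φ (Ioi 0))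
    {t : ℝ} (ht : 0 < t) (ht1 : t ≤ 1) : lnphi φ t ≤ 0 := by
  have h : (0:ℝ) ≤ ∫ s in t..(1:ℝ), 1 / φ s := by
    apply intervalIntegral.integral_nonneg ht1
    intro x hx
    have : 0 < φ x := hpos x (lt_of_lt_of_le ht hx.1)
    positivity
  rw [lnphi, intervalIntegral.integral_symm]
  linarith

/-- interval integrability of s/φ s on [0,x] -/

lemma sphi_intable (hpos : ∀ s > (0:ℝ), 0 < φ s) (hcont : ContinuousOn φ (Ioi 0))
    (hint : IntervalIntegrable (fun s => s / φ s) volume 0 1)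
    {x : ℝ} (hx : 0 ≤ x) : IntervalIntegrable (fun s => s / φ s) volume 0 x := by
  have hc : ContinuousOn (fun s => s / φ s) (Ioi 0) :=
    ContinuousOn.div continuousOn_id hcont (fun y hy => (hpos y hy).ne')
  rcases le_or_gt x 1 with h | h
  · apply hint.mono_set
    rw [uIcc_of_le hx, uIcc_of_le zero_le_one]
    exact Icc_subset_Icc le_rfl h
  · refine hint.trans ?_
    apply ContinuousOn.intervalIntegrable
    apply hc.mono
    rw [uIcc_of_le h.le]
    intro y hy; exact lt_of_lt_of_le one_pos hy.1

lemma F_hasDeriv (hpos : ∀ s > (0:ℝ), 0 < φ s) (hcont : ContinuousOn φ (Ioi 0))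
    (hint : IntervalIntegrable (fun s => s / φ s) volume 0 1)
    {x : ℝ} (hx : 0 < x) :
    HasDerivAt (fun t => ∫ s in (0:ℝ)..t, s / φ s) (x / φ x) x := by
  have hc : ContinuousOn (fun s => s / φ s) (Ioi 0) :=
    ContinuousOn.div continuousOn_id hcont (fun y hy => (hpos y hy).ne')
  exact intervalIntegral.integral_hasDerivAt_right (sphi_intable hpos hcont hint hx.le)
    (hc.stronglyMeasurableAtFilter isOpen_Ioi x hx)
    (hc.continuousAt (isOpen_Ioi.mem_nhds hx))

lemma F_nonneg (hpos : ∀ s > (0:ℝ), 0 < φ s) {x : ℝ} (hx : 0 ≤ x) :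
    0 ≤ ∫ s in (0:ℝ)..x, s / φ s := by
  apply intervalIntegral.integral_nonneg hx
  intro y hy
  rcases eq_or_lt_of_le hy.1 with h | h
  · simp [← h]
  · have := hpos y h; positivity

lemma ibp_bound (hpos : ∀ s > (0:ℝ), 0 < φ s) (hcont : ContinuousOn φ (Ioi 0))
    (hint : IntervalIntegrable (fun s => s / φ s) volume 0 1)
    {a : ℝ} (ha : 0 < a) (ha1 : a ≤ 1) :
    (∫ t in a..(1:ℝ), -lnphi φ t) ≤ ∫ s in (0:ℝ)..1, s / φ s := by
  set F : ℝ → ℝ := fun t => ∫ s in (0:ℝ)..t, s / φ s with hF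
  have hln_int : IntervalIntegrable (lnphi φ) volume a 1 := by
    apply ContinuousOn.intervalIntegrable
    apply (lnphi_cont hpos hcont).mono
    rw [uIcc_of_le ha1]
    intro y hy; exact lt_of_lt_of_le ha hy.1
  have hder : ∀ x ∈ uIcc a (1:ℝ), HasDerivAt (fun t => t * lnphi φ t - F t) (lnphi φ x) x := by
    intro x hx
    rw [uIcc_of_le ha1] at hx
    have hx0 : 0 < x := lt_of_lt_of_le ha hx.1
    have h1 : HasDerivAt (fun t : ℝ => t * lnphi φ t) (1 * lnphi φ x + x * (1 / φ x)) x :=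
      (hasDerivAt_id x).mul (lnphi_hasDeriv hpos hcont hx0)
    have h2 := h1.sub (F_hasDeriv hpos hcont hint hx0)
    convert h2 using 1 <;> try rfl
    field_simp
    ring
  have heq : (∫ t in a..(1:ℝ), lnphi φ t) = ((1:ℝ) * lnphi φ 1 - F 1) - (a * lnphi φ a - F a) :=
    intervalIntegral.integral_eq_sub_of_hasDerivAt hder hln_int
  have h1 : lnphi φ 1 = 0 := intervalIntegral.integral_same
  have h2 : lnphi φ a ≤ 0 := lnphi_nonpos hpos hcont ha ha1
  have h3 : 0 ≤ F a := F_nonneg hpos ha.le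
  rw [intervalIntegral.integral_neg, heq, h1]
  nlinarith

lemma lnphi_integrableOn (hpos : ∀ s > (0:ℝ), 0 < φ s) (hcont : ContinuousOn φ (Ioi 0))
    (hint : IntervalIntegrable (fun s => s / φ s) volume 0 1) :
    IntegrableOn (lnphi φ) (Ioc 0 1) volume := by
  set a : ℕ → ℝ := fun n => ((n:ℝ) + 2)⁻¹ with haa
  have hapos : ∀ n, 0 < a n := fun n => by positivity
  have ha1 : ∀ n, a n ≤ 1 := fun n => by
    rw [haa]
    rw [inv_le_one_iff₀]
    right; push_cast; linarith [Nat.cast_nonneg (α := ℝ) n]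
  have hcont' : ∀ n, IntegrableOn (lnphi φ) (Ioc (a n) 1) volume := by
    intro n
    apply (ContinuousOn.integrableOn_Icc ?_).mono_set Ioc_subset_Icc_self
    apply (lnphi_cont hpos hcont).mono
    intro y hy; exact lt_of_lt_of_le (hapos n) hy.1
  have hatend : Tendsto a atTop (nhds 0) := by
    apply Filter.Tendsto.inv_tendsto_atTop
    exact tendsto_atTop_add_const_right _ 2 tendsto_natCast_atTop_atTop
  apply MeasureTheory.integrableOn_Ioc_of_intervalIntegral_norm_bounded_left
    hcont' hatend
  apply Filter.Eventually.of_forall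
  intro n
  have h1 : (∫ x in Ioc (a n) 1, ‖lnphi φ x‖) = ∫ x in (a n)..(1:ℝ), ‖lnphi φ x‖ := by
    rw [intervalIntegral.integral_of_le (ha1 n)]
  rw [h1]
  have h2 : (∫ x in (a n)..(1:ℝ), ‖lnphi φ x‖) = ∫ x in (a n)..(1:ℝ), -lnphi φ x := by
    apply intervalIntegral.integral_congr
    intro x hx
    rw [uIcc_of_le (ha1 n)] at hx
    have := lnphi_nonpos hpos hcont (lt_of_lt_of_le (hapos n) hx.1) hx.2
    simp only [Real.norm_eq_abs]
    rw [abs_of_nonpos this]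
  rw [h2]
  exact ibp_bound hpos hcont hint (hapos n) (ha1 n)

lemma phi_bound (hpos : ∀ s > (0:ℝ), 0 < φ s) (hmono : MonotoneOn φ (Ioi 0))
    (hcont : ContinuousOn φ (Ioi 0)) {e : ℝ} (he : 0 < e)
    (hθ : ∀ x, 0 < x → x < 1 → e * (φ x / x) ≤ philimsup φ x)
    {a : ℝ} (ha : 0 < a) (ha1 : a ≤ 1) : φ a ≤ φ 1 * a ^ e := by
  rcases eq_or_lt_of_le ha1 with rfl | ha1'
  · simp [Real.one_rpow]
  have key : ∀ ε : ℝ, 0 < ε → φ a * ((1/a) ^ e * Real.exp (-(ε * (1 - a)))) ≤ φ 1 := by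
    intro ε hε
    set f : ℝ → ℝ := fun x => -φ x with hf_def
    set f' : ℝ → ℝ := fun x => -(e * (φ x / x)) with hf'_def
    set B : ℝ → ℝ := fun x => -(φ a * ((x/a) ^ e * Real.exp (-(ε * (x - a))))) with hB_def
    set B' : ℝ → ℝ := fun x => B x * (e / x - ε) with hB'_def
    have hBd : ∀ x : ℝ, 0 < x → HasDerivAt B (B' x) x := by
      intro x hx
      have hxa : 0 < x / a := div_pos hx ha
      have hg1 : HasDerivAt (fun y : ℝ => (y/a) ^ e) (e * (x/a) ^ (e-1) * (1/a)) x := by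
        have hinner : HasDerivAt (fun y : ℝ => y / a) (1/a) x := by
          simpa using (hasDerivAt_id x).div_const a
        have houter : HasDerivAt (fun y : ℝ => y ^ e) (e * (x/a) ^ (e-1)) (x/a) :=
          Real.hasDerivAt_rpow_const (Or.inl hxa.ne')
        exact houter.comp x hinner
      have hg2 : HasDerivAt (fun y : ℝ => Real.exp (-(ε * (y - a))))
          (Real.exp (-(ε * (x - a))) * -ε) x := by
        have hinner : HasDerivAt (fun y : ℝ => -(ε * (y - a))) (-ε) x := by
          simpa using (((hasDerivAt_id x).sub_const a).const_mul ε).fun_neg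
        exact (Real.hasDerivAt_exp _).comp x hinner
      have hprod := ((hg1.fun_mul hg2).const_mul (φ a)).fun_neg
      convert hprod using 1 <;> try rfl
      rw [hB'_def, hB_def]
      have hre : (x/a) ^ (e-1) = (x/a) ^ e / (x/a) := by
        rw [Real.rpow_sub hxa, Real.rpow_one]
      simp only [hre]
      field_simp
      ring
    have happ := image_le_of_liminf_slope_right_lt_deriv_boundary'
      (f := f) (f' := f') (a := a) (b := 1) (B := B) (B' := B')
      ?hfc ?hf' ?ha0 ?hBc ?hB'c ?hbound (right_mem_Icc.mpr ha1)
    · -- conclude from f 1 ≤ B 1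
      rw [hf_def, hB_def] at happ
      simp only at happ
      linarith
    case hfc =>
      apply ContinuousOn.neg
      apply hcont.mono
      intro y hy; exact lt_of_lt_of_le ha hy.1
    case hf' =>
      intro x hx r hr
      have hx0 : 0 < x := lt_of_lt_of_le ha hx.1
      have hφx : 0 < φ x := hpos x hx0
      have hlim : -r < philimsup φ x := by
        apply lt_of_lt_of_le _ (hθ x hx0 hx.2)
        rw [hf'_def] at hr
        simp only at hr
        linarith
      have hfreq0 : ∀ᶠ t in nhdsWithin 0 (Ioi (0:ℝ)),
          (0:ℝ) ≤ (φ (x + t) - φ x) / t := by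
        filter_upwards [self_mem_nhdsWithin] with t ht
        have ht' : (0:ℝ) < t := ht
        apply div_nonneg _ ht'.le
        have hmem : x + t ∈ Ioi (0:ℝ) := mem_Ioi.mpr (by linarith)
        have := hmono (mem_Ioi.mpr hx0) hmem (by linarith : x ≤ x + t)
        linarith
      have hcob : IsCoboundedUnder (· ≤ ·) (nhdsWithin 0 (Ioi (0:ℝ)))
          (fun t => (φ (x + t) - φ x) / t) :=
        IsCoboundedUnder.of_frequently_ge hfreq0.frequently
      have hfreq : ∃ᶠ t in nhdsWithin 0 (Ioi (0:ℝ)), -r < (φ (x + t) - φ x) / t :=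
        Filter.frequently_lt_of_lt_limsup hcob hlim
      have hmap : Filter.map (fun t => x + t) (nhdsWithin 0 (Ioi (0:ℝ)))
          = nhdsWithin x (Ioi x) := by
        have := (Homeomorph.addLeft x).isEmbedding.map_nhdsWithin_eq (Ioi (0:ℝ)) 0
        simpa [image_const_add_Ioi] using this
      rw [← hmap, Filter.frequently_map]
      apply (hfreq.and_eventually self_mem_nhdsWithin).mono
      rintro t ⟨htr, ht0⟩
      have ht0' : (0:ℝ) < t := ht0
      rw [slope_def_field, hf_def]
      simp only
      have h1 : x + t - x = t := by ring
      rw [h1]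
      have h2 : (-φ (x + t) - -φ x) / t = -((φ (x + t) - φ x) / t) := by ring
      rw [h2]
      linarith
    case ha0 =>
      rw [hf_def, hB_def]
      simp [div_self ha.ne', Real.one_rpow]
    case hBc =>
      intro y hy
      exact (hBd y (lt_of_lt_of_le ha hy.1)).continuousAt.continuousWithinAt
    case hB'c =>
      intro y hy
      exact (hBd y (lt_of_lt_of_le ha hy.1)).hasDerivWithinAt
    case hbound =>
      intro x hx hfb
      have hx0 : 0 < x := lt_of_lt_of_le ha hx.1
      have hφx : 0 < φ x := hpos x hx0
      show -(e * (φ x / x)) < B x * (e / x - ε)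
      rw [← hfb]
      show -(e * (φ x / x)) < -φ x * (e / x - ε)
      have hrw : -φ x * (e / x - ε) = -(e * (φ x / x)) + ε * φ x := by
        field_simp; ring
      rw [hrw]
      nlinarith
  have hcont2 : Continuous fun ε : ℝ => φ a * ((1/a) ^ e * Real.exp (-(ε * (1 - a)))) := by
    fun_prop
  have hlim : Tendsto (fun ε : ℝ => φ a * ((1/a) ^ e * Real.exp (-(ε * (1 - a)))))
      (nhdsWithin 0 (Ioi 0)) (nhds (φ a * ((1/a) ^ e * 1))) := by
    have := hcont2.tendsto 0
    simp only [zero_mul, neg_zero, Real.exp_zero] at this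
    exact this.mono_left nhdsWithin_le_nhds
  have hle : φ a * ((1/a) ^ e * 1) ≤ φ 1 := by
    apply le_of_tendsto hlim
    filter_upwards [self_mem_nhdsWithin] with ε hε
    exact key ε hε
  have hprod : (1/a:ℝ) ^ e * a ^ e = 1 := by
    rw [← Real.mul_rpow (by positivity) ha.le, one_div, inv_mul_cancel₀ ha.ne', Real.one_rpow]
  have hae : (0:ℝ) ≤ a ^ e := Real.rpow_nonneg ha.le e
  have h2 := mul_le_mul_of_nonneg_right hle hae
  calc φ a = φ a * ((1/a) ^ e * 1) * a ^ e := by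
        rw [mul_one, mul_assoc, hprod, mul_one]
    _ ≤ φ 1 * a ^ e := h2

lemma psiInf_case (hu_deriv : ∀ x : ℝ, 0 < x → HasDerivAt u (L x) x)
    (hL_deriv : ∀ x : ℝ, 0 < x → HasDerivAt L (Q x) x)
    (hL1 : L 1 = 0)
    (hconv : ConvexOn ℝ Set.univ (psiInf u)) : 0 ≤ u 1 + Q 1 := by
  set E : ℝ → ℝ := fun r => Real.exp r * u (Real.exp (-r)) +
    Real.exp r * (L (Real.exp (-r)) * -Real.exp (-r)) with hE_def
  have hinner : ∀ r : ℝ, HasDerivAt (fun y : ℝ => Real.exp (-y)) (-Real.exp (-r)) r := by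
    intro r
    simpa [Function.comp_def] using (Real.hasDerivAt_exp (-r)).comp r (hasDerivAt_neg r)
  have hψd : ∀ r : ℝ, HasDerivAt (psiInf u) (E r) r := by
    intro r
    have h2 : HasDerivAt (u ∘ (fun y : ℝ => Real.exp (-y)))
        (L (Real.exp (-r)) * -Real.exp (-r)) r :=
      HasDerivAt.comp r (hu_deriv _ (Real.exp_pos _)) (hinner r)
    exact (Real.hasDerivAt_exp r).mul h2
  have hmonoD : MonotoneOn (deriv (psiInf u)) univ :=
    hconv.monotoneOn_deriv (fun x _ => (hψd x).differentiableAt)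
  have hDeq : deriv (psiInf u) = E := funext fun r => (hψd r).deriv
  rw [hDeq] at hmonoD
  -- differentiate E at 0
  have hE1 : HasDerivAt (fun r : ℝ => Real.exp r * u (Real.exp (-r))) (E 0) 0 := hψd 0
  have hEL : HasDerivAt (L ∘ (fun y : ℝ => Real.exp (-y))) (Q (Real.exp (-(0:ℝ))) * -Real.exp (-(0:ℝ))) 0 :=
    HasDerivAt.comp 0 (hL_deriv _ (Real.exp_pos _)) (hinner 0)
  have hEN : HasDerivAt (fun r : ℝ => -Real.exp (-r)) (Real.exp (-(0:ℝ))) 0 := by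
    simpa using (hinner 0).fun_neg
  have hE2 : HasDerivAt (fun r : ℝ => Real.exp r * ((L ∘ (fun y : ℝ => Real.exp (-y))) r * -Real.exp (-r)))
      (1 * (L (Real.exp (-(0:ℝ))) * -Real.exp (-(0:ℝ))) +
        Real.exp (0:ℝ) * ((Q (Real.exp (-(0:ℝ))) * -Real.exp (-(0:ℝ))) * -Real.exp (-(0:ℝ)) +
          L (Real.exp (-(0:ℝ))) * Real.exp (-(0:ℝ)))) 0 := by
    have := (Real.hasDerivAt_exp (0:ℝ)).fun_mul (hEL.fun_mul hEN)
    simpa [Real.exp_zero] using this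
  have hEd : HasDerivAt E (E 0 + (1 * (L (Real.exp (-(0:ℝ))) * -Real.exp (-(0:ℝ))) +
        Real.exp (0:ℝ) * ((Q (Real.exp (-(0:ℝ))) * -Real.exp (-(0:ℝ))) * -Real.exp (-(0:ℝ)) +
          L (Real.exp (-(0:ℝ))) * Real.exp (-(0:ℝ))))) 0 := hE1.add hE2
  have h0 := aux_mono hmonoD univ_mem hEd
  simp only [hE_def, Function.comp, neg_zero, Real.exp_zero, hL1] at h0
  nlinarith [h0]

lemma psiN_case {N : ℝ} (hN : N ≠ 0)
    (hu_deriv : ∀ x : ℝ, 0 < x → HasDerivAt u (L x) x)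
    (hL_deriv : ∀ x : ℝ, 0 < x → HasDerivAt L (Q x) x)
    (hL1 : L 1 = 0)
    (hconv : ConvexOn ℝ (Ioi 0) (psiN N u)) : 0 ≤ N * (N - 1) * u 1 + N ^ 2 * Q 1 := by
  set E : ℝ → ℝ := fun r => N * r ^ (N - 1) * u (r ^ (-N)) +
    r ^ N * (L (r ^ (-N)) * (-N * r ^ (-N - 1))) with hE_def
  have hψd : ∀ r ∈ Ioi (0:ℝ), HasDerivAt (psiN N u) (E r) r := by
    intro r hr
    have hr0 : (0:ℝ) < r := hr
    have hrpow : HasDerivAt (fun y : ℝ => y ^ N) (N * r ^ (N - 1)) r :=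
      Real.hasDerivAt_rpow_const (Or.inl hr0.ne')
    have hinner : HasDerivAt (fun y : ℝ => y ^ (-N)) (-N * r ^ (-N - 1)) r :=
      Real.hasDerivAt_rpow_const (Or.inl hr0.ne')
    have hx : 0 < r ^ (-N) := Real.rpow_pos_of_pos hr0 _
    have hcomp : HasDerivAt (u ∘ fun y : ℝ => y ^ (-N))
        (L (r ^ (-N)) * (-N * r ^ (-N - 1))) r :=
      HasDerivAt.comp r (hu_deriv _ hx) hinner
    exact hrpow.mul hcomp
  have hmonoD : MonotoneOn (deriv (psiN N u)) (Ioi 0) :=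
    hconv.monotoneOn_deriv (fun x hx => (hψd x hx).differentiableAt)
  have hDeqev : deriv (psiN N u) =ᶠ[nhds 1] E := by
    filter_upwards [isOpen_Ioi.mem_nhds (show (0:ℝ) < 1 by norm_num)] with r hr
    exact (hψd r hr).deriv
  -- derivative of E at 1
  have h11 : HasDerivAt (fun y : ℝ => N * y ^ (N - 1)) (N * ((N - 1) * (1:ℝ) ^ (N - 1 - 1))) 1 :=
    (Real.hasDerivAt_rpow_const (Or.inl one_ne_zero)).const_mul N
  have hinner1 : HasDerivAt (fun y : ℝ => y ^ (-N)) (-N * (1:ℝ) ^ (-N - 1)) 1 :=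
    Real.hasDerivAt_rpow_const (Or.inl one_ne_zero)
  have hx1 : (0:ℝ) < (1:ℝ) ^ (-N) := Real.rpow_pos_of_pos one_pos _
  have h12 : HasDerivAt (u ∘ fun y : ℝ => y ^ (-N))
      (L ((1:ℝ) ^ (-N)) * (-N * (1:ℝ) ^ (-N - 1))) 1 :=
    HasDerivAt.comp 1 (hu_deriv _ hx1) hinner1
  have h21 : HasDerivAt (fun y : ℝ => y ^ N) (N * (1:ℝ) ^ (N - 1)) 1 :=
    Real.hasDerivAt_rpow_const (Or.inl one_ne_zero)
  have h22 : HasDerivAt (L ∘ fun y : ℝ => y ^ (-N))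
      (Q ((1:ℝ) ^ (-N)) * (-N * (1:ℝ) ^ (-N - 1))) 1 :=
    HasDerivAt.comp 1 (hL_deriv _ hx1) hinner1
  have h23 : HasDerivAt (fun y : ℝ => -N * y ^ (-N - 1))
      (-N * ((-N - 1) * (1:ℝ) ^ (-N - 1 - 1))) 1 :=
    (Real.hasDerivAt_rpow_const (Or.inl one_ne_zero)).const_mul (-N)
  have hEd : HasDerivAt E
      ((N * ((N - 1) * (1:ℝ) ^ (N - 1 - 1))) * u ((1:ℝ) ^ (-N)) +
        (N * (1:ℝ) ^ (N - 1)) * (L ((1:ℝ) ^ (-N)) * (-N * (1:ℝ) ^ (-N - 1))) +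
       ((N * (1:ℝ) ^ (N - 1)) * ((L ∘ fun y : ℝ => y ^ (-N)) 1 * (-N * (1:ℝ) ^ (-N - 1))) +
        (1:ℝ) ^ N * ((Q ((1:ℝ) ^ (-N)) * (-N * (1:ℝ) ^ (-N - 1))) * (-N * (1:ℝ) ^ (-N - 1)) +
          (L ∘ fun y : ℝ => y ^ (-N)) 1 * (-N * ((-N - 1) * (1:ℝ) ^ (-N - 1 - 1)))))) 1 :=
    (h11.mul h12).add (h21.mul (h22.mul h23))
  have hD1 : HasDerivAt (deriv (psiN N u)) _ 1 := hEd.congr_of_eventuallyEq hDeqev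
  have h0 := aux_mono hmonoD (isOpen_Ioi.mem_nhds (show (0:ℝ) < 1 by norm_num)) hD1
  simp only [Real.one_rpow, Function.comp, hL1, mul_one, one_mul, mul_zero, zero_mul,
    add_zero, zero_add] at h0
  nlinarith [h0]

lemma lnphi_intable (hpos : ∀ s > (0:ℝ), 0 < φ s) (hcont : ContinuousOn φ (Ioi 0))
    (hint : IntervalIntegrable (fun s => s / φ s) volume 0 1)
    {x : ℝ} (hx : 0 ≤ x) : IntervalIntegrable (lnphi φ) volume 0 x := by
  have h01 : IntervalIntegrable (lnphi φ) volume 0 1 := by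
    rw [intervalIntegrable_iff_integrableOn_Ioc_of_le zero_le_one]
    exact lnphi_integrableOn hpos hcont hint
  rcases le_or_gt x 1 with h | h
  · apply h01.mono_set
    rw [uIcc_of_le hx, uIcc_of_le zero_le_one]
    exact Icc_subset_Icc le_rfl h
  · refine h01.trans ?_
    apply ContinuousOn.intervalIntegrable
    apply (lnphi_cont hpos hcont).mono
    rw [uIcc_of_le h.le]
    intro y hy; exact lt_of_lt_of_le one_pos hy.1

lemma uphi_hasDeriv (hpos : ∀ s > (0:ℝ), 0 < φ s) (hcont : ContinuousOn φ (Ioi 0))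
    (hint : IntervalIntegrable (fun s => s / φ s) volume 0 1)
    {x : ℝ} (hx : 0 < x) : HasDerivAt (uphi φ) (lnphi φ x) x :=
  intervalIntegral.integral_hasDerivAt_right (lnphi_intable hpos hcont hint hx.le)
    ((lnphi_cont hpos hcont).stronglyMeasurableAtFilter isOpen_Ioi x hx)
    ((lnphi_cont hpos hcont).continuousAt (isOpen_Ioi.mem_nhds hx))

lemma u_lower (hpos : ∀ s > (0:ℝ), 0 < φ s) (hcont : ContinuousOn φ (Ioi 0))
    (hint : IntervalIntegrable (fun s => s / φ s) volume 0 1)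
    {e : ℝ} (he2 : e < 2) (hne1 : e ≠ 1)
    (hkey : ∀ s, 0 < s → s ≤ 1 → φ s ≤ φ 1 * s ^ e) :
    1 / ((2 - e) * φ 1) ≤ -(uphi φ 1) := by
  have φ1pos : 0 < φ 1 := hpos 1 one_pos
  have h1e : (1:ℝ) - e ≠ 0 := fun h => hne1 (by linarith)
  have h2e : (2:ℝ) - e ≠ 0 := fun h => absurd h (by intro; linarith)
  set c : ℝ → ℝ := fun t => (1 - t ^ (1 - e)) / ((1 - e) * φ 1) with hc_def
  have hpt : ∀ t, 0 < t → t ≤ 1 → c t ≤ -lnphi φ t := by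
    intro t ht ht1
    have hcmp : (∫ s in t..(1:ℝ), s ^ (-e) / φ 1) ≤ ∫ s in t..(1:ℝ), 1 / φ s := by
      apply intervalIntegral.integral_mono_on ht1
      · apply ContinuousOn.intervalIntegrable
        rw [uIcc_of_le ht1]
        apply ContinuousOn.div_const
        exact continuousOn_id.rpow_const (fun s hs =>
          Or.inl (ne_of_gt (lt_of_lt_of_le ht hs.1)))
      · apply ContinuousOn.intervalIntegrable
        rw [uIcc_of_le ht1]
        apply ContinuousOn.div continuousOn_const
        · exact hcont.mono (fun y hy => lt_of_lt_of_le ht hy.1)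
        · intro y hy; exact (hpos y (lt_of_lt_of_le ht hy.1)).ne'
      · intro s hs
        have hs0 : 0 < s := lt_of_lt_of_le ht hs.1
        have hφs : 0 < φ s := hpos s hs0
        have hse : 0 < s ^ e := Real.rpow_pos_of_pos hs0 e
        have heq : s ^ (-e) / φ 1 = 1 / (φ 1 * s ^ e) := by
          rw [Real.rpow_neg hs0.le]
          field_simp
        rw [heq]
        exact one_div_le_one_div_of_le hφs (hkey s hs0 hs.2)
    have hval : (∫ s in t..(1:ℝ), s ^ (-e) / φ 1) = c t := by
      rw [intervalIntegral.integral_div, integral_rpow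
        (Or.inr ⟨by intro h; apply hne1; linarith [neg_eq_iff_eq_neg.mp h],
          by rw [uIcc_of_le ht1]; intro h0; exact absurd h0.1 (by linarith)⟩)]
      rw [hc_def]
      have h2 : -e + 1 = 1 - e := by ring
      rw [h2, Real.one_rpow]
      simp only
      rw [div_div]
    have hln : -lnphi φ t = ∫ s in t..(1:ℝ), 1 / φ s := by
      rw [lnphi, intervalIntegral.integral_symm]
      ring
    rw [hln]
    calc c t = ∫ s in t..(1:ℝ), s ^ (-e) / φ 1 := hval.symm
      _ ≤ _ := hcmp
  -- now integrate the pointwise bound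
  have hint_c : IntervalIntegrable c volume 0 1 := by
    apply IntervalIntegrable.div_const
    exact intervalIntegrable_const.sub (intervalIntegral.intervalIntegrable_rpow' (by linarith))
  have hint_l : IntervalIntegrable (fun t => -lnphi φ t) volume 0 1 := by
    apply IntervalIntegrable.neg
    rw [intervalIntegrable_iff_integrableOn_Ioc_of_le zero_le_one]
    exact lnphi_integrableOn hpos hcont hint
  have hmono_int : (∫ t in (0:ℝ)..1, c t) ≤ ∫ t in (0:ℝ)..1, -lnphi φ t := by
    apply intervalIntegral.integral_mono_ae_restrict zero_le_one hint_c hint_l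
    have h1 : ∀ᵐ x ∂(volume.restrict (Icc (0:ℝ) 1)), x ∈ Icc (0:ℝ) 1 :=
      ae_restrict_mem measurableSet_Icc
    have h2 : ∀ᵐ x ∂(volume.restrict (Icc (0:ℝ) 1)), x ≠ 0 := by
      apply ae_restrict_of_ae
      rw [MeasureTheory.ae_iff]
      convert Real.volume_singleton (a := 0) using 2
      ext x; simp
    filter_upwards [h1, h2] with x hx hx0
    exact hpt x (lt_of_le_of_ne hx.1 (Ne.symm hx0)) hx.2
  have hval2 : (∫ t in (0:ℝ)..1, c t) = 1 / ((2 - e) * φ 1) := by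
    rw [hc_def]
    simp only
    rw [intervalIntegral.integral_div, intervalIntegral.integral_sub intervalIntegrable_const
      (intervalIntegral.intervalIntegrable_rpow' (by linarith)),
      intervalIntegral.integral_const, integral_rpow (Or.inl (by linarith))]
    have h2 : (1:ℝ) - e + 1 = 2 - e := by ring
    rw [h2, Real.one_rpow, Real.zero_rpow h2e]
    field_simp
    ring
  have huphi : -(uphi φ 1) = ∫ t in (0:ℝ)..1, -lnphi φ t := by
    rw [uphi, intervalIntegral.integral_neg]
  rw [huphi, ← hval2]
  exact hmono_int

end AuxLemmas

/-- If `u_φ` is well-defined, `δ_φ < 2`, and `u_φ ∈ DC_N` for some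
`N ∈ (-∞,0) ∪ (1,∞]` (i.e. with parameter `m = (N-1)/N > 0`), then
`δ_φ ≤ (N+1)/N = 2 - m`. -/
theorem stmt10 (φ : ℝ → ℝ)
    (hpos : ∀ s > (0:ℝ), 0 < φ s)
    (hmono : MonotoneOn φ (Ioi 0))
    (hcont : ContinuousOn φ (Ioi 0))
    (hint : IntervalIntegrable (fun s => s / φ s) MeasureTheory.volume 0 1)
    (δ : ℝ) (hδ : IsGLB (thetaSet φ) δ) (hδ2 : δ < 2)
    (m : ℝ) (hm : 0 < m) (h : memDC m (uphi φ)) :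
    δ ≤ 2 - m := by
  have φ1pos : 0 < φ 1 := hpos 1 one_pos
  obtain ⟨-, -, -, hif⟩ := h
  have hu_deriv : ∀ x : ℝ, 0 < x → HasDerivAt (uphi φ) (lnphi φ x) x :=
    fun x hx => uphi_hasDeriv hpos hcont hint hx
  have hL_deriv : ∀ x : ℝ, 0 < x → HasDerivAt (lnphi φ) ((fun y => 1 / φ y) x) x :=
    fun x hx => lnphi_hasDeriv hpos hcont hx
  have hL1 : lnphi φ 1 = 0 := lnphi_one
  have hcvx : 0 ≤ m * uphi φ 1 + 1 / φ 1 := by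
    by_cases hm1 : m = 1
    · rw [if_pos hm1] at hif
      have hres := psiInf_case hu_deriv hL_deriv hL1 hif
      try simp only at hres
      rw [hm1]
      linarith
    · rw [if_neg hm1] at hif
      set N : ℝ := 1 / (1 - m) with hN_def
      have hm1' : (1:ℝ) - m ≠ 0 := fun hh => hm1 (by linarith)
      have hN : N ≠ 0 := one_div_ne_zero hm1'
      have hcase := psiN_case hN hu_deriv hL_deriv hL1 hif
      try simp only at hcase
      have hNm : N - 1 = m * N := by
        rw [hN_def]; field_simp; ring
      have hN2 : 0 < N ^ 2 := by
        rcases lt_or_gt_of_ne hN with hh | hh <;> nlinarith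
      have h5 : N * (N - 1) * uphi φ 1 + N ^ 2 * (1 / φ 1)
          = N ^ 2 * (m * uphi φ 1 + 1 / φ 1) := by
        linear_combination (uphi φ 1) * N * hNm
      rw [h5] at hcase
      nlinarith [hcase, hN2]
  by_contra hcon
  push_neg at hcon
  obtain ⟨e, he1, he2, hne1⟩ : ∃ e, 2 - m < e ∧ e < δ ∧ e ≠ 1 := by
    by_cases h1 : ((2 - m) + δ) / 2 = 1
    · have hδ1 : 1 < δ := by nlinarith [hcon]
      exact ⟨(1 + δ) / 2, by nlinarith, by linarith, by intro hh; nlinarith⟩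
    · exact ⟨((2 - m) + δ) / 2, by linarith, by linarith, h1⟩
  have he2' : e < 2 := lt_trans he2 hδ2
  have hθ : ∀ x, 0 < x → x < 1 → e * (φ x / x) ≤ philimsup φ x := by
    intro x hx hx1
    have hθx : δ ≤ x / φ x * philimsup φ x := hδ.1 ⟨x, hx, rfl⟩
    have hφx : 0 < φ x := hpos x hx
    have h6 : x / φ x * philimsup φ x * (φ x / x) = philimsup φ x := by
      field_simp
    have h5 : δ * (φ x / x) ≤ philimsup φ x := by
      calc δ * (φ x / x) ≤ x / φ x * philimsup φ x * (φ x / x) :=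
            mul_le_mul_of_nonneg_right hθx (by positivity)
        _ = philimsup φ x := h6
    have h7 : e * (φ x / x) ≤ δ * (φ x / x) :=
      mul_le_mul_of_nonneg_right he2.le (by positivity)
    linarith
  have hkey : ∀ s, 0 < s → s ≤ 1 → φ s ≤ φ 1 * s ^ e := by
    rcases le_or_gt e 0 with he0 | he0
    · intro s hs hs1
      have h7 : φ s ≤ φ 1 := hmono (mem_Ioi.mpr hs) (mem_Ioi.mpr one_pos) hs1
      have h8 : (1:ℝ) ≤ s ^ e := Real.one_le_rpow_of_pos_of_le_one_of_nonpos hs hs1 he0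
      nlinarith [hpos s hs]
    · intro s hs hs1
      exact phi_bound hpos hmono hcont he0 hθ hs hs1
  have hlow := u_lower hpos hcont hint he2' hne1 hkey
  have h2e : (0:ℝ) < 2 - e := by linarith
  have hch : m * (1 / ((2 - e) * φ 1)) ≤ 1 / φ 1 :=
    le_trans (mul_le_mul_of_nonneg_left hlow hm.le) (by linarith [hcvx])
  rw [mul_one_div, div_le_div_iff₀ (by positivity) φ1pos] at hch
  nlinarith [φ1pos]
end

section
/- Given 0 < m ≤ m' < 1 with m + m' > 1, set β = 1 + (1-m')/(1-m) ∈ (1,2]. Then βm' > 1, and for any a, r > 0: e_m( -(ar - 1/√m')² + 1/m' ) ≤ e_m(β) · e_m( -(1 - 1/(βm')) · a²r²/(m+m'-1) ), where e_m(τ) = [1+(m-1)τ]₊^{1/(m-1)}. -/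
open ENNReal

set_option maxHeartbeats 1000000

/-- For `0 < m ≤ m' < 1` with `m + m' > 1` and `β = 1 + (1-m')/(1-m) ∈ (1,2]`:
`βm' > 1` and for all `a, r > 0`,
`e_m(-(ar - 1/√m')² + 1/m') ≤ e_m(β)·e_m(-(1 - 1/(βm'))·a²r²/(m+m'-1))`. -/
theorem stmt15 (m m' : ℝ) (hm : 0 < m) (hmm : m ≤ m') (hm' : m' < 1)
    (hsum : 1 < m + m') :
    1 < 1 + (1 - m') / (1 - m) ∧ 1 + (1 - m') / (1 - m) ≤ 2 ∧
    1 < (1 + (1 - m') / (1 - m)) * m' ∧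
    ∀ a r : ℝ, 0 < a → 0 < r →
      expm m (-(a * r - 1 / Real.sqrt m') ^ 2 + 1 / m') ≤
        expm m (1 + (1 - m') / (1 - m)) *
          expm m (-(1 - 1 / ((1 + (1 - m') / (1 - m)) * m')) *
            (a ^ 2 * r ^ 2) / (m + m' - 1)) := by
  have h1m : (0:ℝ) < 1 - m := by linarith
  have h1m' : (0:ℝ) < 1 - m' := by linarith
  have hm'pos : 0 < m' := lt_of_lt_of_le hm hmm
  have hD : (0:ℝ) < m + m' - 1 := by linarith
  set β : ℝ := 1 + (1 - m') / (1 - m) with hβ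
  have hβ1 : 1 < β := by
    have : 0 < (1 - m') / (1 - m) := div_pos h1m' h1m
    simp only [hβ]; linarith
  have hβ2 : β ≤ 2 := by
    have : (1 - m') / (1 - m) ≤ 1 := (div_le_one h1m).mpr (by linarith)
    simp only [hβ]; linarith
  have hβeq : (1 - m) * β = 2 - m - m' := by
    rw [hβ]; field_simp; ring
  have hβm'sub : β * m' - 1 = (m + m' - 1) * (1 - m') / (1 - m) := by
    rw [hβ]; field_simp; ring
  have hβm' : 1 < β * m' := by
    have h0 : 0 < (m + m' - 1) * (1 - m') / (1 - m) := by positivity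
    nlinarith [hβm'sub, h0]
  refine ⟨hβ1, hβ2, hβm', ?_⟩
  intro a r ha hr
  set x : ℝ := a * r with hx
  have hxpos : 0 < x := mul_pos ha hr
  set s : ℝ := Real.sqrt m' with hsdef
  have hs : 0 < s := Real.sqrt_pos.mpr hm'pos
  have hs2 : s ^ 2 = m' := Real.sq_sqrt hm'pos.le
  have hB : 0 < β * m' := by linarith
  -- the three base values
  have hm1 : m ≠ 1 := by linarith
  have hmlt : ¬ (1 < m) := by linarith
  -- uβ
  have huβ : 1 + (m - 1) * β = m + m' - 1 := by nlinarith [hβeq]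
  have huβpos : 0 < 1 + (m - 1) * β := by rw [huβ]; exact hD
  -- u₂
  set τ₂ : ℝ := -(1 - 1 / (β * m')) * (a ^ 2 * r ^ 2) / (m + m' - 1) with hτ₂
  have hBinv : 1 / (β * m') < 1 := by
    rw [div_lt_one hB]; exact hβm'
  have hu2eq : 1 + (m - 1) * τ₂ = 1 + (1 - m) * (1 - 1 / (β * m')) * x ^ 2 / (m + m' - 1) := by
    rw [hτ₂]; field_simp [hx]; ring
  have hu2pos : 0 < 1 + (m - 1) * τ₂ := by
    rw [hu2eq]
    have : 0 ≤ (1 - m) * (1 - 1 / (β * m')) * x ^ 2 / (m + m' - 1) := by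
      apply div_nonneg _ hD.le
      have : 0 ≤ 1 - 1 / (β * m') := by linarith
      positivity
    linarith
  -- u₁
  set τ₁ : ℝ := -(x - 1 / s) ^ 2 + 1 / m' with hτ₁
  have hexp : (x - 1 / s) ^ 2 - 1 / m' = x ^ 2 - 2 * x * (1 / s) := by
    have h1 : (1 / s) ^ 2 = 1 / m' := by
      rw [div_pow, one_pow, hs2]
    linear_combination h1
  have hu1eq : 1 + (m - 1) * τ₁ = 1 + (1 - m) * (x ^ 2 - 2 * x * (1 / s)) := by
    rw [hτ₁]
    have : (m - 1) * (-(x - 1 / s) ^ 2 + 1 / m') = (1 - m) * ((x - 1 / s) ^ 2 - 1 / m') := by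
      ring
    rw [this, hexp]
  -- key AM-GM
  have key0 : 2 * x * β * s ≤ β ^ 2 * m' + x ^ 2 := by
    nlinarith [sq_nonneg (β * s - x), hs2]
  have key1 : 2 * x / s ≤ β + x ^ 2 / (β * m') := by
    have e1 : 2 * x / s = (2 * x * β * s) / (β * m') := by
      rw [← hs2]; field_simp
    have e2 : β + x ^ 2 / (β * m') = (β ^ 2 * m' + x ^ 2) / (β * m') := by
      field_simp
    rw [e1, e2]
    gcongr
  -- key inequality between u-values
  have hkey : (1 + (m - 1) * β) * (1 + (m - 1) * τ₂) ≤ 1 + (m - 1) * τ₁ := by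
    rw [huβ, hu2eq, hu1eq]
    have hmul := mul_le_mul_of_nonneg_left key1 h1m.le
    have hexpand : (m + m' - 1) * (1 + (1 - m) * (1 - 1 / (β * m')) * x ^ 2 / (m + m' - 1))
        = (m + m' - 1) + (1 - m) * x ^ 2 - (1 - m) * (x ^ 2 / (β * m')) := by
      field_simp
      ring
    rw [hexpand]
    have h4 : (1 - m) * (2 * x / s) ≤ (2 - m - m') + (1 - m) * (x ^ 2 / (β * m')) := by
      rw [← hβeq, ← mul_add]; exact hmul
    ring_nf at h4 ⊢
    linarith [h4]
  have hu1pos : 0 < 1 + (m - 1) * τ₁ :=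
    lt_of_lt_of_le (mul_pos huβpos hu2pos) hkey
  -- unfold expm
  have hp : 1 / (m - 1) ≤ 0 := by
    apply div_nonpos_of_nonneg_of_nonpos <;> linarith
  simp only [expm, if_neg hm1, if_neg hmlt, if_neg (not_le.mpr hu1pos),
    if_neg (not_le.mpr huβpos), if_neg (not_le.mpr hu2pos)]
  rw [← ENNReal.ofReal_mul (by positivity)]
  apply ENNReal.ofReal_le_ofReal
  rw [← Real.mul_rpow huβpos.le hu2pos.le]
  exact Real.rpow_le_rpow_of_nonpos (mul_pos huβpos hu2pos) hkey hp
end
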